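/- arXiv:2402.18105 — 3 statements merged into one kernel-verified Lean document; each statement's English description precedes it below -/
import Mathlib

section
/- Let (X1, Y1), (X2, Y2), (X3, Y3) be i.i.d. copies of (X, Y), where X is continuous with CDF F and Y categorical with p_k = P(Y = k) > 0. Then Δ := Σ_k p_k ∫ (F_k(x) − F(x))² dF(x) = Σ_{k=1}^K (1/p_k) P(min(X1, X2) > X3, Y1 = Y2 = k) − 1/3. -/
open MeasureTheory ProbabilityTheory Set Filter Topology


lemma cdf_map_eq {μ : Measure ℝ} [IsProbabilityMeasure μ] {F : ℝ → ℝ}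
    (hF : ∀ x, F x = (μ (Iic x)).toReal) (hFc : Continuous F) :
    μ.map F = volume.restrict (Ioc (0:ℝ) 1) := by
  have hmono : Monotone F := fun a b hab => by
    rw [hF, hF]
    exact ENNReal.toReal_mono (measure_ne_top _ _) (measure_mono (Iic_subset_Iic.2 hab))
  have h0 : ∀ x, 0 ≤ F x := fun x => by rw [hF]; exact ENNReal.toReal_nonneg
  have h1 : ∀ x, F x ≤ 1 := fun x => by
    rw [hF]
    calc (μ (Iic x)).toReal ≤ (μ univ).toReal :=
          ENNReal.toReal_mono (measure_ne_top _ _) (measure_mono (subset_univ _))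
      _ = 1 := by simp
  have hofReal : ∀ x, μ (Iic x) = ENNReal.ofReal (F x) := fun x => by
    rw [hF, ENNReal.ofReal_toReal (measure_ne_top _ _)]
  have htop : Tendsto F atTop (𝓝 1) := by
    have h := (ENNReal.tendsto_toReal (measure_ne_top μ univ)).comp
      (tendsto_measure_Iic_atTop (μ := μ))
    simp only [Function.comp, measure_univ, ENNReal.toReal_one] at h
    exact h.congr (fun x => (hF x).symm)
  have hbot : Tendsto F atBot (𝓝 0) := by
    have h := (ENNReal.tendsto_toReal (measure_ne_top μ (Iic 0))).comp
      (tendsto_measure_Ioc_atBot μ 0)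
    have heq : ∀ᶠ x in atBot, (μ (Ioc x 0)).toReal = F 0 - F x := by
      refine eventually_atBot.2 ⟨0, fun x hx => ?_⟩
      have hu : μ (Iic x) + μ (Ioc x 0) = μ (Iic 0) := by
        rw [← Iic_union_Ioc_eq_Iic hx]
        exact (measure_union (Iic_disjoint_Ioc le_rfl) measurableSet_Ioc).symm
      have := congrArg ENNReal.toReal hu
      rw [ENNReal.toReal_add (measure_ne_top _ _) (measure_ne_top _ _)] at this
      rw [hF, hF]; linarith
    have h2 : Tendsto (fun x => F 0 - F x) atBot (𝓝 (F 0)) := by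
      refine Tendsto.congr' heq ?_
      convert h using 2
      simp [Function.comp, hF]
      exact hF 0
    have h3 := (tendsto_const_nhds (x := F 0) (f := atBot (α := ℝ))).sub h2
    simpa using h3
  refine Measure.ext_of_Iic _ _ (fun t => ?_)
  rw [Measure.map_apply hFc.measurable measurableSet_Iic,
    Measure.restrict_apply measurableSet_Iic]
  rcases lt_or_ge t 0 with ht | ht
  · have h1' : F ⁻¹' Iic t = ∅ := by
      ext x; simp only [mem_preimage, mem_Iic, mem_empty_iff_false, iff_false, not_le]
      exact lt_of_lt_of_le ht (h0 x)
    have h2' : Iic t ∩ Ioc (0:ℝ) 1 = ∅ := by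
      ext x; simp only [mem_inter_iff, mem_Iic, mem_Ioc, mem_empty_iff_false, iff_false]
      rintro ⟨hx1, hx2, -⟩; linarith
    rw [h1', h2']; simp
  rcases le_or_gt 1 t with ht1 | ht1
  · have h1' : F ⁻¹' Iic t = univ := by
      ext x; simp only [mem_preimage, mem_Iic, mem_univ, iff_true]
      exact (h1 x).trans ht1
    have h2' : Iic t ∩ Ioc (0:ℝ) 1 = Ioc 0 1 := by
      apply inter_eq_self_of_subset_right
      intro x hx; exact hx.2.trans ht1
    rw [h1', h2']
    simp [Real.volume_Ioc]
  · -- 0 ≤ t < 1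
    have h2' : Iic t ∩ Ioc (0:ℝ) 1 = Ioc 0 t := by
      ext x; simp only [mem_inter_iff, mem_Iic, mem_Ioc]
      constructor
      · rintro ⟨h1, h2, h3⟩; exact ⟨h2, h1⟩
      · rintro ⟨h1, h2⟩; exact ⟨h2, h1, h2.trans (le_of_lt ht1)⟩
    rw [h2', Real.volume_Ioc, sub_zero]
    have hclosed : IsClosed (F ⁻¹' Iic t) := isClosed_Iic.preimage hFc
    rcases eq_empty_or_nonempty (F ⁻¹' Iic t) with he | hne
    · rw [he]
      have ht0 : t = 0 := by
        by_contra h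
        have ht' : 0 < t := lt_of_le_of_ne ht (Ne.symm h)
        obtain ⟨x, hx⟩ := (hbot.eventually_lt_const ht').exists
        have hmem : x ∈ F ⁻¹' Iic t := le_of_lt hx
        rw [he] at hmem
        exact hmem
      simp [ht0]
    · have hbdd : BddAbove (F ⁻¹' Iic t) := by
        obtain ⟨x₀, hx₀⟩ := (htop.eventually_const_lt ht1).exists_forall_of_atTop
        refine ⟨x₀, fun x hx => ?_⟩
        by_contra h
        exact absurd (mem_preimage.1 hx) (not_le.2 (hx₀ x (le_of_lt (not_le.1 h))))
      set a := sSup (F ⁻¹' Iic t) with ha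
      have hamem : a ∈ F ⁻¹' Iic t := hclosed.csSup_mem hne hbdd
      have hFat : F a ≤ t := mem_preimage.1 hamem
      have hSeq : F ⁻¹' Iic t = Iic a := by
        apply Subset.antisymm
        · exact fun x hx => le_csSup hbdd hx
        · intro x hx
          exact mem_preimage.2 (le_trans (hmono hx) hFat)
      have hFa2 : t ≤ F a := by
        have htnd : Tendsto (fun n : ℕ => F (a + 1 / (n + 1))) atTop (𝓝 (F a)) := by
          have : Tendsto (fun n : ℕ => a + 1 / (n + 1 : ℝ)) atTop (𝓝 a) := by
            have := tendsto_one_div_add_atTop_nhds_zero_nat (𝕜 := ℝ)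
            have h' := tendsto_const_nhds (x := a) (f := atTop (α := ℕ)) |>.add this
            simpa using h'
          exact (hFc.tendsto a).comp this
        refine ge_of_tendsto' htnd (fun n => ?_)
        by_contra h
        have hmem : a + 1 / (n + 1 : ℝ) ∈ F ⁻¹' Iic t :=
          mem_preimage.2 (le_of_lt (not_le.1 h))
        have := le_csSup hbdd hmem
        have hpos : (0:ℝ) < 1 / (n + 1 : ℝ) := by positivity
        linarith
      have hFa : F a = t := le_antisymm hFat hFa2
      rw [hSeq, hofReal, hFa]

lemma cdf_pow_integral' {μ : Measure ℝ} [IsProbabilityMeasure μ] {F : ℝ → ℝ}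
    (hF : ∀ x, F x = (μ (Iic x)).toReal) (hFc : Continuous F) (n : ℕ) :
    ∫ x, F x ^ n ∂μ = 1 / (n + 1) := by
  have h1 : ∫ x, F x ^ n ∂μ = ∫ y, y ^ n ∂(μ.map F) := by
    rw [integral_map hFc.measurable.aemeasurable]
    exact (measurable_id.pow_const n).aestronglyMeasurable
  rw [h1, cdf_map_eq hF hFc]
  rw [← intervalIntegral.integral_of_le (zero_le_one)]
  rw [integral_pow]
  simp


/-- Δ = Σ_k (1/p_k) P(min(X1,X2) > X3, Y1 = Y2 = k) − 1/3 for i.i.d. copies of (X,Y). -/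
theorem stmt_6 {Ω : Type*} [MeasurableSpace Ω] (P : Measure Ω) [IsProbabilityMeasure P]
    {K : ℕ} (X : Ω → ℝ) (Y : Ω → Fin K) (hX : Measurable X) (hY : Measurable Y)
    (F : ℝ → ℝ) (hF : ∀ x, F x = (P {ω | X ω ≤ x}).toReal) (hFc : Continuous F)
    (p : Fin K → ℝ) (hp : ∀ k, p k = (P {ω | Y ω = k}).toReal) (hppos : ∀ k, 0 < p k)
    (Fk : Fin K → ℝ → ℝ)
    (hFk : ∀ k x, Fk k x = (P {ω | X ω ≤ x ∧ Y ω = k}).toReal / p k)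
    (Z : Fin 3 → Ω → ℝ × Fin K) (hZ : ∀ i, Measurable (Z i))
    (hindep : iIndepFun Z P)
    (hident : ∀ i, IdentDistrib (Z i) (fun ω => (X ω, Y ω)) P P) :
    ∑ k, p k * ∫ x, (Fk k x - F x) ^ 2 ∂(Measure.map X P)
      = ∑ k, (1 / p k) *
          (P {ω | min (Z 0 ω).1 (Z 1 ω).1 > (Z 2 ω).1 ∧ (Z 0 ω).2 = k ∧ (Z 1 ω).2 = k}).toReal
        - 1 / 3 := by
  classical
  have hpne : ∀ k, p k ≠ 0 := fun k => (hppos k).ne'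
  set μ : Measure ℝ := Measure.map X P with hμ
  have hXY : Measurable fun ω => (X ω, Y ω) := hX.prodMk hY
  set ν : Measure (ℝ × Fin K) := P.map (fun ω => (X ω, Y ω)) with hν
  have hνprob : IsProbabilityMeasure ν := Measure.isProbabilityMeasure_map hXY.aemeasurable
  have hμprob : IsProbabilityMeasure μ := Measure.isProbabilityMeasure_map hX.aemeasurable
  have hZlaw : ∀ i, P.map (Z i) = ν := fun i => (hident i).map_eq
  have hμν : ν.map Prod.fst = μ := by
    rw [hν, Measure.map_map measurable_fst hXY]; rfl
  have hFμ : ∀ x, F x = (μ (Iic x)).toReal := fun x => by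
    rw [hF, hμ, Measure.map_apply hX measurableSet_Iic]; rfl
  -- measurability of basic sets
  have hmE1 : ∀ (k : Fin K) (x : ℝ), MeasurableSet {ω | X ω ≤ x ∧ Y ω = k} := fun k x => by
    have : {ω | X ω ≤ x ∧ Y ω = k} = X ⁻¹' (Iic x) ∩ Y ⁻¹' {k} := by
      ext ω; simp
    rw [this]; exact (hX measurableSet_Iic).inter (hY (measurableSet_singleton k))
  have hmE2 : ∀ (k : Fin K) (x : ℝ), MeasurableSet {ω | x < X ω ∧ Y ω = k} := fun k x => by
    have : {ω | x < X ω ∧ Y ω = k} = X ⁻¹' (Ioi x) ∩ Y ⁻¹' {k} := by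
      ext ω; simp
    rw [this]; exact (hX measurableSet_Ioi).inter (hY (measurableSet_singleton k))
  have hmEk : ∀ (k : Fin K), MeasurableSet {ω | Y ω = k} := fun k =>
    hY (measurableSet_singleton k)
  -- Fk basic properties
  have hpFk : ∀ k x, p k * Fk k x = (P {ω | X ω ≤ x ∧ Y ω = k}).toReal := fun k x => by
    rw [hFk]; exact mul_div_cancel₀ _ (hpne k)
  have hFkmono : ∀ k, Monotone (Fk k) := fun k a b hab => by
    rw [hFk, hFk]
    refine (div_le_div_iff_of_pos_right (hppos k)).2 (ENNReal.toReal_mono (measure_ne_top _ _)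
      (measure_mono (fun ω h => ⟨h.1.trans hab, h.2⟩)))
  have hFkmeas : ∀ k, Measurable (Fk k) := fun k => (hFkmono k).measurable
  have hFk0 : ∀ k x, 0 ≤ Fk k x := fun k x => by
    rw [hFk]; exact div_nonneg ENNReal.toReal_nonneg (hppos k).le
  have hFk1 : ∀ k x, Fk k x ≤ 1 := fun k x => by
    rw [hFk, div_le_one (hppos k), hp]
    exact ENNReal.toReal_mono (measure_ne_top _ _) (measure_mono (fun ω h => h.2))
  have hF0 : ∀ x, 0 ≤ F x := fun x => by rw [hF]; positivity
  have hF1 : ∀ x, F x ≤ 1 := fun x => by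
    rw [hF]
    calc (P {ω | X ω ≤ x}).toReal ≤ (P univ).toReal :=
          ENNReal.toReal_mono (measure_ne_top _ _) (measure_mono (subset_univ _))
      _ = 1 := by simp
  -- sums over k
  have hsum : ∀ x, ∑ k, p k * Fk k x = F x := fun x => by
    have h1 : ∀ k : Fin K, p k * Fk k x = (P {ω | X ω ≤ x ∧ Y ω = k}).toReal := fun k => hpFk k x
    have hdisj : Pairwise (Function.onFun Disjoint fun k : Fin K => {ω | X ω ≤ x ∧ Y ω = k}) := by
      intro i j hij
      refine Set.disjoint_left.2 (fun ω h1 h2 => hij ?_)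
      exact h1.2.symm.trans h2.2
    simp_rw [h1]
    rw [← ENNReal.toReal_sum (fun k _ => measure_ne_top _ _), hF]
    congr 1
    rw [← tsum_fintype (L := SummationFilter.unconditional _), ← measure_iUnion hdisj (fun k => hmE1 k x)]
    congr 1
    ext ω
    simp only [mem_iUnion, mem_setOf_eq]
    exact ⟨fun ⟨k, hk⟩ => hk.1, fun h => ⟨Y ω, h, rfl⟩⟩
  have hsump : ∑ k, p k = 1 := by
    have hdisj : Pairwise (Function.onFun Disjoint fun k : Fin K => {ω | Y ω = k}) := by
      intro i j hij
      refine Set.disjoint_left.2 (fun ω h1 h2 => hij ?_)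
      exact h1.symm.trans h2
    simp_rw [hp]
    rw [← ENNReal.toReal_sum (fun k _ => measure_ne_top _ _)]
    rw [← tsum_fintype (L := SummationFilter.unconditional _), ← measure_iUnion hdisj hmEk]
    have : ⋃ k, {ω | Y ω = k} = univ := by ext ω; simp
    rw [this]; simp
  -- tail probabilities
  have hPk : ∀ (k : Fin K) (x : ℝ),
      P {ω | x < X ω ∧ Y ω = k} = ENNReal.ofReal (p k * (1 - Fk k x)) := by
    intro k x
    have hu : P {ω | X ω ≤ x ∧ Y ω = k} + P {ω | x < X ω ∧ Y ω = k} = P {ω | Y ω = k} := by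
      rw [← measure_union ?_ (hmE2 k x)]
      · congr 1; ext ω
        simp only [mem_union, mem_setOf_eq]
        constructor
        · rintro (⟨-, h⟩ | ⟨-, h⟩) <;> exact h
        · intro h
          rcases le_or_gt (X ω) x with hx | hx
          · exact Or.inl ⟨hx, h⟩
          · exact Or.inr ⟨hx, h⟩
      · refine Set.disjoint_left.2 (fun ω h1 h2 => ?_)
        exact absurd h1.1 (not_le.2 h2.1)
    have htr := congrArg ENNReal.toReal hu
    rw [ENNReal.toReal_add (measure_ne_top _ _) (measure_ne_top _ _)] at htr
    have h2 : (P {ω | x < X ω ∧ Y ω = k}).toReal = p k * (1 - Fk k x) := by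
      rw [mul_one_sub, hpFk, hp]; linarith
    rw [← h2, ENNReal.ofReal_toReal (measure_ne_top _ _)]
  have hνS : ∀ (k : Fin K) (x : ℝ),
      ν {q : ℝ × Fin K | x < q.1 ∧ q.2 = k} = ENNReal.ofReal (p k * (1 - Fk k x)) := by
    intro k x
    have hms : MeasurableSet {q : ℝ × Fin K | x < q.1 ∧ q.2 = k} := by
      have : {q : ℝ × Fin K | x < q.1 ∧ q.2 = k}
          = Prod.fst ⁻¹' (Ioi x) ∩ Prod.snd ⁻¹' {k} := by ext q; simp
      rw [this]
      exact (measurable_fst measurableSet_Ioi).inter (measurable_snd (measurableSet_singleton k))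
    rw [hν, Measure.map_apply hXY hms]
    exact hPk k x
  -- the key probability computation
  have hPA : ∀ k : Fin K,
      (P {ω | min (Z 0 ω).1 (Z 1 ω).1 > (Z 2 ω).1 ∧ (Z 0 ω).2 = k ∧ (Z 1 ω).2 = k}).toReal
        = ∫ x, (p k * (1 - Fk k x)) ^ 2 ∂μ := by
    intro k
    have hI01 : IndepFun (fun ω => (Z 0 ω, Z 1 ω)) (Z 2) P :=
      hindep.indepFun_prodMk hZ 0 1 2 (by decide) (by decide)
    have h01 : P.map (fun ω => (Z 0 ω, Z 1 ω)) = ν.prod ν := by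
      have h := (indepFun_iff_map_prod_eq_prod_map_map (hZ 0).aemeasurable
        (hZ 1).aemeasurable).1 (hindep.indepFun (show (0:Fin 3) ≠ 1 by decide))
      rwa [hZlaw 0, hZlaw 1] at h
    have htriple : P.map (fun ω => (Z 2 ω, (Z 0 ω, Z 1 ω))) = ν.prod (ν.prod ν) := by
      have h := (indepFun_iff_map_prod_eq_prod_map_map (hZ 2).aemeasurable
        ((hZ 0).prodMk (hZ 1)).aemeasurable).1 hI01.symm
      rwa [hZlaw 2, h01] at h
    set S : ℝ → Set (ℝ × Fin K) := fun x => {q | x < q.1 ∧ q.2 = k} with hS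
    have hmS : ∀ x, MeasurableSet (S x) := fun x => by
      have : S x = Prod.fst ⁻¹' (Ioi x) ∩ Prod.snd ⁻¹' {k} := by ext q; simp [hS]
      rw [this]
      exact (measurable_fst measurableSet_Ioi).inter (measurable_snd (measurableSet_singleton k))
    set B : Set ((ℝ × Fin K) × (ℝ × Fin K) × (ℝ × Fin K)) :=
      {q | (q.1.1 < q.2.1.1 ∧ q.2.1.2 = k) ∧ (q.1.1 < q.2.2.1 ∧ q.2.2.2 = k)} with hB
    have hmB : MeasurableSet B := by
      refine MeasurableSet.inter ?_ ?_
      · exact ((measurableSet_lt (measurable_fst.comp measurable_fst)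
            (measurable_fst.comp (measurable_fst.comp measurable_snd))).inter
          ((measurable_snd.comp (measurable_fst.comp measurable_snd))
            (measurableSet_singleton k)))
      · exact ((measurableSet_lt (measurable_fst.comp measurable_fst)
            (measurable_fst.comp (measurable_snd.comp measurable_snd))).inter
          ((measurable_snd.comp (measurable_snd.comp measurable_snd))
            (measurableSet_singleton k)))
    have hpre : {ω | min (Z 0 ω).1 (Z 1 ω).1 > (Z 2 ω).1 ∧ (Z 0 ω).2 = k ∧ (Z 1 ω).2 = k}
        = (fun ω => (Z 2 ω, (Z 0 ω, Z 1 ω))) ⁻¹' B := by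
      ext ω
      simp only [hB, mem_setOf_eq, mem_preimage, gt_iff_lt, lt_min_iff]
      tauto
    have hmt : Measurable fun ω => (Z 2 ω, (Z 0 ω, Z 1 ω)) :=
      (hZ 2).prodMk ((hZ 0).prodMk (hZ 1))
    have hPB : P {ω | min (Z 0 ω).1 (Z 1 ω).1 > (Z 2 ω).1 ∧ (Z 0 ω).2 = k ∧ (Z 1 ω).2 = k}
        = (ν.prod (ν.prod ν)) B := by
      rw [hpre, ← Measure.map_apply hmt hmB, htriple]
    have hslice : ∀ c : ℝ × Fin K, Prod.mk c ⁻¹' B = (S c.1) ×ˢ (S c.1) := by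
      intro c; ext r
      simp only [hB, hS, mem_preimage, mem_setOf_eq, mem_prod]
    have hprod : (ν.prod (ν.prod ν)) B = ∫⁻ c, ν (S c.1) * ν (S c.1) ∂ν := by
      rw [Measure.prod_apply hmB]
      refine lintegral_congr (fun c => ?_)
      rw [hslice c, Measure.prod_prod]
    have hnn : ∀ x, 0 ≤ p k * (1 - Fk k x) := fun x =>
      mul_nonneg (hppos k).le (by linarith [hFk1 k x])
    have hmg : Measurable fun x : ℝ => ENNReal.ofReal ((p k * (1 - Fk k x)) ^ 2) :=
      (((measurable_const.sub (hFkmeas k)).const_mul (p k)).pow_const 2).ennreal_ofReal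
    have hlint : ∫⁻ c, ν (S c.1) * ν (S c.1) ∂ν
        = ∫⁻ x, ENNReal.ofReal ((p k * (1 - Fk k x)) ^ 2) ∂μ := by
      rw [← hμν, lintegral_map hmg measurable_fst]
      refine lintegral_congr (fun c => ?_)
      rw [hνS k c.1, ← ENNReal.ofReal_mul (hnn c.1), ← sq]
    have hfin : ∫ x, (p k * (1 - Fk k x)) ^ 2 ∂μ
        = (∫⁻ x, ENNReal.ofReal ((p k * (1 - Fk k x)) ^ 2) ∂μ).toReal := by
      rw [integral_eq_lintegral_of_nonneg_ae (f := fun x => (p k * (1 - Fk k x)) ^ 2) (ae_of_all _ fun x => sq_nonneg _)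
        (((measurable_const.sub (hFkmeas k)).const_mul (p k)).pow_const
          2).aestronglyMeasurable]
    rw [hPB, hprod, hlint, hfin]
  -- integrability facts
  have hFmeas : Measurable F := hFc.measurable
  have hbd : ∀ f : ℝ → ℝ, Measurable f → (∀ x, |f x| ≤ 1) → Integrable f μ := fun f hf hb =>
    (integrable_const (1:ℝ)).mono' hf.aestronglyMeasurable (ae_of_all _ hb)
  have habs : ∀ a : ℝ, 0 ≤ a → a ≤ 1 → |a| ≤ 1 := fun a h0 h1 => abs_le.2 ⟨by linarith, h1⟩
  have iFk : ∀ k, Integrable (fun x => Fk k x) μ := fun k =>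
    hbd _ (hFkmeas k) fun x => habs _ (hFk0 k x) (hFk1 k x)
  have iFk2 : ∀ k, Integrable (fun x => Fk k x ^ 2) μ := fun k =>
    hbd _ ((hFkmeas k).pow_const 2) fun x =>
      habs _ (sq_nonneg _) (by nlinarith [hFk0 k x, hFk1 k x])
  have iFkF : ∀ k, Integrable (fun x => Fk k x * F x) μ := fun k =>
    hbd _ ((hFkmeas k).mul hFmeas) fun x =>
      habs _ (mul_nonneg (hFk0 k x) (hF0 x)) (by nlinarith [hFk0 k x, hFk1 k x, hF0 x, hF1 x])
  have iF2 : Integrable (fun x => F x ^ 2) μ :=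
    hbd _ (hFmeas.pow_const 2) fun x => habs _ (sq_nonneg _) (by nlinarith [hF0 x, hF1 x])
  have hintF : ∫ x, F x ∂μ = 1 / 2 := by
    have h := cdf_pow_integral' hFμ hFc 1
    norm_num at h
    exact h
  have hintF2 : ∫ x, F x ^ 2 ∂μ = 1 / 3 := by
    have h := cdf_pow_integral' hFμ hFc 2
    norm_num at h
    exact h
  -- expansions
  have hexpL : ∀ k, ∫ x, (Fk k x - F x) ^ 2 ∂μ
      = (∫ x, Fk k x ^ 2 ∂μ) - 2 * (∫ x, Fk k x * F x ∂μ) + 1 / 3 := by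
    intro k
    have heq : (fun x => (Fk k x - F x) ^ 2)
        = fun x => Fk k x ^ 2 - 2 * (Fk k x * F x) + F x ^ 2 := by
      funext x; ring
    have i1 : Integrable (fun x => Fk k x ^ 2 - 2 * (Fk k x * F x)) μ :=
      (iFk2 k).sub ((iFkF k).const_mul 2)
    rw [heq, integral_add i1 iF2,
      integral_sub (iFk2 k) ((iFkF k).const_mul 2), integral_const_mul, hintF2]
  have hexpR : ∀ k, ∫ x, (1 - Fk k x) ^ 2 ∂μ
      = 1 - 2 * (∫ x, Fk k x ∂μ) + ∫ x, Fk k x ^ 2 ∂μ := by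
    intro k
    have heq : (fun x => (1 - Fk k x) ^ 2)
        = fun x => 1 - 2 * Fk k x + Fk k x ^ 2 := by funext x; ring
    have i1 : Integrable (fun x => 1 - 2 * Fk k x) μ :=
      (integrable_const 1).sub ((iFk k).const_mul 2)
    rw [heq, integral_add i1 (iFk2 k),
      integral_sub (integrable_const 1) ((iFk k).const_mul 2), integral_const_mul,
      integral_const]
    simp
  have hcross : ∑ k, p k * ∫ x, Fk k x * F x ∂μ = 1 / 3 := by
    have h1 : ∀ k : Fin K, p k * ∫ x, Fk k x * F x ∂μ = ∫ x, p k * (Fk k x * F x) ∂μ :=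
      fun k => (integral_const_mul _ _).symm
    simp_rw [h1]
    rw [← integral_finset_sum _ (fun k _ => (iFkF k).const_mul (p k))]
    have hpt : ∀ x, ∑ k : Fin K, p k * (Fk k x * F x) = F x ^ 2 := fun x => by
      have h2 : ∀ k : Fin K, p k * (Fk k x * F x) = p k * Fk k x * F x := fun k => by ring
      simp_rw [h2]
      rw [← Finset.sum_mul, hsum, sq]
    simp only [hpt]
    exact hintF2
  have hmean : ∑ k, p k * ∫ x, Fk k x ∂μ = 1 / 2 := by
    have h1 : ∀ k : Fin K, p k * ∫ x, Fk k x ∂μ = ∫ x, p k * Fk k x ∂μ :=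
      fun k => (integral_const_mul _ _).symm
    simp_rw [h1]
    rw [← integral_finset_sum _ (fun k _ => (iFk k).const_mul (p k))]
    simp only [hsum]
    exact hintF
  -- right-hand side terms
  have hterm : ∀ k : Fin K,
      (1 / p k) * (P {ω | min (Z 0 ω).1 (Z 1 ω).1 > (Z 2 ω).1
          ∧ (Z 0 ω).2 = k ∧ (Z 1 ω).2 = k}).toReal
        = p k * ∫ x, (1 - Fk k x) ^ 2 ∂μ := by
    intro k
    rw [hPA k]
    have h2 : ∀ x, (p k * (1 - Fk k x)) ^ 2 = p k ^ 2 * (1 - Fk k x) ^ 2 := fun x => by ring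
    simp only [h2]
    rw [integral_const_mul, ← mul_assoc]
    have h3 : 1 / p k * p k ^ 2 = p k := by
      field_simp [sq]
    rw [h3]
  have hRsum : (∑ k, (1 / p k) * (P {ω | min (Z 0 ω).1 (Z 1 ω).1 > (Z 2 ω).1
        ∧ (Z 0 ω).2 = k ∧ (Z 1 ω).2 = k}).toReal)
      = ∑ k, p k * ∫ x, Fk k x ^ 2 ∂μ := by
    rw [Finset.sum_congr rfl (fun k _ => hterm k)]
    calc ∑ k, p k * ∫ x, (1 - Fk k x) ^ 2 ∂μ
        = ∑ k, (p k - 2 * (p k * ∫ x, Fk k x ∂μ) + p k * ∫ x, Fk k x ^ 2 ∂μ) := by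
          refine Finset.sum_congr rfl fun k _ => ?_
          rw [hexpR k]; ring
      _ = (∑ k, p k) - 2 * (∑ k, p k * ∫ x, Fk k x ∂μ)
            + ∑ k, p k * ∫ x, Fk k x ^ 2 ∂μ := by
          rw [Finset.sum_add_distrib, Finset.sum_sub_distrib, ← Finset.mul_sum]
      _ = ∑ k, p k * ∫ x, Fk k x ^ 2 ∂μ := by rw [hsump, hmean]; ring
  rw [hRsum]
  calc ∑ k, p k * ∫ x, (Fk k x - F x) ^ 2 ∂μ
      = ∑ k, (p k * ∫ x, Fk k x ^ 2 ∂μ - 2 * (p k * ∫ x, Fk k x * F x ∂μ) + p k * (1/3)) := by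
        refine Finset.sum_congr rfl fun k _ => ?_
        rw [hexpL k]; ring
    _ = (∑ k, p k * ∫ x, Fk k x ^ 2 ∂μ) - 2 * (∑ k, p k * ∫ x, Fk k x * F x ∂μ)
          + (∑ k, p k) * (1/3) := by
        rw [Finset.sum_add_distrib, Finset.sum_sub_distrib, ← Finset.mul_sum, ← Finset.sum_mul]
    _ = (∑ k, p k * ∫ x, Fk k x ^ 2 ∂μ) - 1 / 3 := by rw [hcross, hsump]; ring
end

section
/- Under independence of X (continuous) and Y (categorical, P(Y = k) = p_k), for i.i.d. copies (Xi, Yi): Cov( I(min(X1,X2) > X3, Y1 = Y2 = k), I(min(X4,X5) > X1, Y4 = Y5 = k) ) = −(2/45) p_k⁴. -/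
open MeasureTheory Set Filter
open scoped ENNReal

section AuxCDF

lemma map_cdf_unif (ν : Measure ℝ) [IsProbabilityMeasure ν] (F : ℝ → ℝ)
    (hF : ∀ x, F x = (ν (Set.Iic x)).toReal) (hFc : Continuous F) :
    ν.map F = volume.restrict (Set.Ioc 0 1) := by
  have hcdf : F = ProbabilityTheory.cdf ν := by
    funext x; rw [hF x, ProbabilityTheory.cdf_eq_real, Measure.real]
  have hof : ∀ x, ν (Iic x) = ENNReal.ofReal (F x) := by
    intro x; rw [hF x, ENNReal.ofReal_toReal (measure_ne_top _ _)]
  have hF0 : ∀ x, 0 ≤ F x := fun x => by rw [hF x]; exact ENNReal.toReal_nonneg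
  have hF1 : ∀ x, F x ≤ 1 := fun x => by
    rw [hcdf]; exact ProbabilityTheory.cdf_le_one _ _
  have hmono : Monotone F := by rw [hcdf]; exact ProbabilityTheory.monotone_cdf _
  have htop : Tendsto F atTop (nhds 1) := by
    rw [hcdf]; exact ProbabilityTheory.tendsto_cdf_atTop _
  have hbot : Tendsto F atBot (nhds 0) := by
    rw [hcdf]; exact ProbabilityTheory.tendsto_cdf_atBot _
  have hFm : Measurable F := hFc.measurable
  haveI : IsProbabilityMeasure (ν.map F) := Measure.isProbabilityMeasure_map hFm.aemeasurable
  refine Measure.ext_of_Iic _ _ (fun a => ?_)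
  rw [Measure.map_apply hFm measurableSet_Iic, Measure.restrict_apply measurableSet_Iic]
  rcases lt_or_ge a 0 with ha | ha
  · have h1 : F ⁻¹' Iic a = ∅ := by
      ext x; simp only [mem_preimage, mem_Iic, mem_empty_iff_false, iff_false, not_le]
      exact lt_of_lt_of_le ha (hF0 x)
    have h2 : Iic a ∩ Ioc 0 1 = ∅ := by
      ext x; simp only [mem_inter_iff, mem_Iic, mem_Ioc, mem_empty_iff_false, iff_false]
      rintro ⟨h1', h2', _⟩; linarith
    rw [h1, h2]; simp
  rcases le_or_gt 1 a with ha1 | ha1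
  · have h1 : F ⁻¹' Iic a = univ := by
      ext x; simp only [mem_preimage, mem_Iic, mem_univ, iff_true]
      exact le_trans (hF1 x) ha1
    have h2 : Iic a ∩ Ioc 0 1 = Ioc 0 1 := by
      rw [inter_eq_self_of_subset_right]
      rintro x ⟨h1', h2'⟩; exact le_trans h2' ha1
    rw [h1, h2, measure_univ, Real.volume_Ioc]; norm_num
  · have h2 : Iic a ∩ Ioc 0 1 = Ioc 0 a := by
      ext x; simp only [mem_inter_iff, mem_Iic, mem_Ioc]
      exact ⟨fun ⟨u, v, _⟩ => ⟨v, u⟩, fun ⟨u, v⟩ => ⟨v, u, le_trans v ha1.le⟩⟩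
    rw [h2, Real.volume_Ioc, sub_zero]
    by_cases hne : (F ⁻¹' Iic a).Nonempty
    · have hclosed : IsClosed (F ⁻¹' Iic a) := isClosed_Iic.preimage hFc
      obtain ⟨x₀, hx₀⟩ := (htop.eventually (eventually_gt_nhds ha1)).exists
      have hbdd : BddAbove (F ⁻¹' Iic a) := ⟨x₀, fun x hx => by
        simp only [mem_preimage, mem_Iic] at hx
        by_contra h; push_neg at h
        have := hmono h.le; linarith⟩
      have hbmem : sSup (F ⁻¹' Iic a) ∈ F ⁻¹' Iic a := hclosed.csSup_mem hne hbdd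
      set b := sSup (F ⁻¹' Iic a) with hb
      have hFba : F b ≤ a := hbmem
      have hFb : F b = a := by
        by_contra h
        have hlt : F b < a := lt_of_le_of_ne hFba h
        have hev : ∀ᶠ x in nhds b, F x < a := (hFc.tendsto b).eventually (eventually_lt_nhds hlt)
        obtain ⟨δ, hδ, hδ'⟩ := Metric.eventually_nhds_iff.1 hev
        have hmem : b + δ/2 ∈ F ⁻¹' Iic a := by
          refine mem_preimage.2 (mem_Iic.2 (hδ' ?_).le)
          rw [Real.dist_eq]
          have he : b + δ/2 - b = δ/2 := by ring
          rw [he, abs_of_nonneg (by linarith)]; linarith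
        have := le_csSup hbdd hmem; linarith
      have hS : F ⁻¹' Iic a = Iic b := by
        ext x; simp only [mem_preimage, mem_Iic]
        exact ⟨fun hx => le_csSup hbdd hx, fun hx => le_trans (hmono hx) hFba⟩
      rw [hS, hof b, hFb]
    · rw [not_nonempty_iff_eq_empty.1 hne, measure_empty]
      have h0 : a ≤ 0 := by
        by_contra h; push_neg at h
        obtain ⟨x, hx⟩ := (hbot.eventually (eventually_lt_nhds h)).exists
        exact absurd ⟨x, mem_preimage.2 (mem_Iic.2 hx.le)⟩ hne
      have : a = 0 := le_antisymm h0 ha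
      simp [this]

variable {ν : Measure ℝ} [IsProbabilityMeasure ν] {F : ℝ → ℝ}

lemma lint_comp_cdf (hFc : Continuous F) (hmap : ν.map F = volume.restrict (Set.Ioc 0 1))
    {g : ℝ → ℝ≥0∞} (hg : Measurable g) :
    ∫⁻ x, g (F x) ∂ν = ∫⁻ s in Set.Ioc (0:ℝ) 1, g s ∂volume := by
  rw [← lintegral_map hg hFc.measurable, hmap]

lemma lint_I3 (hFc : Continuous F) (hmap : ν.map F = volume.restrict (Set.Ioc 0 1)) :
    ∫⁻ x, ENNReal.ofReal ((1 - F x) * (1 - F x)) ∂ν = ENNReal.ofReal (1/3) := by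
  rw [lint_comp_cdf hFc hmap (g := fun s => ENNReal.ofReal ((1 - s) * (1 - s)))
    (by fun_prop)]
  rw [← ofReal_integral_eq_lintegral_ofReal
    ((by continuity : Continuous (fun s : ℝ => (1 - s) * (1 - s)))).integrableOn_Ioc
    (ae_of_all _ fun s => mul_self_nonneg _)]
  congr 1
  rw [← intervalIntegral.integral_of_le zero_le_one]
  have : ∀ s : ℝ, (1 - s) * (1 - s) = (fun u => u ^ 2) (1 - s) := by intro s; ring
  rw [intervalIntegral.integral_congr (fun s _ => this s),
    intervalIntegral.integral_comp_sub_left (fun u => u ^ 2) 1]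
  rw [integral_pow]; norm_num

lemma lint_I15 (hFc : Continuous F) (hmap : ν.map F = volume.restrict (Set.Ioc 0 1)) :
    ∫⁻ x, ENNReal.ofReal ((1 - F x) * (1 - F x) * (F x - F x * F x / 2)) ∂ν
      = ENNReal.ofReal (1/15) := by
  rw [lint_comp_cdf hFc hmap
    (g := fun s => ENNReal.ofReal ((1 - s) * (1 - s) * (s - s * s / 2))) (by fun_prop)]
  rw [← ofReal_integral_eq_lintegral_ofReal
    ((by continuity : Continuous (fun s : ℝ => (1 - s) * (1 - s) * (s - s * s / 2)))).integrableOn_Ioc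
    ((ae_restrict_iff' measurableSet_Ioc).2 (ae_of_all _ fun s hs => by
      have h1 : 0 < s := hs.1
      have h2 : s ≤ 1 := hs.2
      have := mul_self_nonneg (1 - s)
      simp only [Pi.zero_apply]
      have h3 : s * s ≤ s := by nlinarith
      nlinarith [mul_nonneg this (by linarith : (0:ℝ) ≤ s - s * s / 2)]))]
  congr 1
  rw [← intervalIntegral.integral_of_le zero_le_one]
  have : ∀ s : ℝ, (1 - s) * (1 - s) * (s - s * s / 2) = (fun u => (u^2 - u^4)/2) (1 - s) := by
    intro s; ring
  rw [intervalIntegral.integral_congr (fun s _ => this s),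
    intervalIntegral.integral_comp_sub_left (fun u => (u^2 - u^4)/2) 1]
  norm_num [intervalIntegral.integral_div, intervalIntegral.integral_sub
    (intervalIntegral.intervalIntegrable_pow 2) (intervalIntegral.intervalIntegrable_pow 4), integral_pow]

lemma lint_T (hFc : Continuous F) (hmap : ν.map F = volume.restrict (Set.Ioc 0 1))
    (hmono : Monotone F) (hF0 : ∀ x, 0 ≤ F x) (hF1 : ∀ x, F x ≤ 1) (u : ℝ) :
    ∫⁻ x, (if x < u then (1:ℝ≥0∞) else 0) * ENNReal.ofReal (1 - F x) ∂ν
      = ENNReal.ofReal (F u - F u * F u / 2) := by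
  have hFm : Measurable F := hFc.measurable
  have hnull : ν {x | F x = F u} = 0 := by
    have he : {x | F x = F u} = F ⁻¹' {F u} := rfl
    rw [he, ← Measure.map_apply hFm (measurableSet_singleton _), hmap,
      Measure.restrict_apply (measurableSet_singleton _)]
    exact measure_mono_null inter_subset_left Real.volume_singleton
  have hae0 : ∀ᵐ x ∂ν, F x ≠ F u := by
    rw [ae_iff]; simpa using hnull
  have hae : ∀ᵐ x ∂ν, (if x < u then (1:ℝ≥0∞) else 0) * ENNReal.ofReal (1 - F x)
      = (fun s => (if s ≤ F u then (1:ℝ≥0∞) else 0) * ENNReal.ofReal (1 - s)) (F x) := by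
    filter_upwards [hae0] with x hx
    by_cases hxu : x < u
    · simp [hxu, hmono hxu.le]
    · have h1 : F u ≤ F x := hmono (not_lt.1 hxu)
      have h2 : ¬ (F x ≤ F u) := fun h => hx (le_antisymm h h1)
      simp [hxu, h2]
  rw [lintegral_congr_ae hae,
    lint_comp_cdf hFc hmap (g := fun s => (if s ≤ F u then (1:ℝ≥0∞) else 0) * ENNReal.ofReal (1 - s))
      (Measurable.mul (Measurable.ite measurableSet_Iic measurable_const measurable_const)
        (by fun_prop))]
  have he2 : ∀ s : ℝ, (if s ≤ F u then (1:ℝ≥0∞) else 0) * ENNReal.ofReal (1 - s)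
      = (Set.Iic (F u)).indicator (fun s => ENNReal.ofReal (1 - s)) s := by
    intro s; rw [Set.indicator_apply]
    by_cases h : s ≤ F u <;> simp [h, Set.mem_Iic]
  rw [lintegral_congr (fun s => he2 s), lintegral_indicator measurableSet_Iic,
    Measure.restrict_restrict measurableSet_Iic]
  have hs : Set.Iic (F u) ∩ Set.Ioc 0 1 = Set.Ioc 0 (F u) := by
    ext s; simp only [mem_inter_iff, mem_Iic, mem_Ioc]
    exact ⟨fun ⟨h1, h2, _⟩ => ⟨h2, h1⟩, fun ⟨h1, h2⟩ => ⟨h2, h1, le_trans h2 (hF1 u)⟩⟩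
  rw [hs, ← ofReal_integral_eq_lintegral_ofReal
    ((by continuity : Continuous (fun s : ℝ => 1 - s))).integrableOn_Ioc
    ((ae_restrict_iff' measurableSet_Ioc).2 (ae_of_all _ fun s hs' => by
      have := hs'.2; have := hF1 u; simp only [Pi.zero_apply]; linarith))]
  congr 1
  rw [← intervalIntegral.integral_of_le (hF0 u),
    intervalIntegral.integral_sub intervalIntegrable_const intervalIntegral.intervalIntegrable_id,
    intervalIntegral.integral_const, integral_id]
  simp; ring

end AuxCDF

lemma chi_ne_top {c : Prop} [Decidable c] : (if c then (1:ℝ≥0∞) else 0) ≠ ⊤ := by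
  split <;> simp

lemma lmarginal_const' {δ : Type*} [DecidableEq δ] {π : δ → Type*} [∀ i, MeasurableSpace (π i)]
    (μ : ∀ i, Measure (π i)) [∀ i, IsProbabilityMeasure (μ i)] (s : Finset δ) (C : ℝ≥0∞) :
    (∫⋯∫⁻_s, (fun _ => C) ∂μ) = fun _ => C := by
  funext x
  simp [lmarginal, lintegral_const]

section Main
variable {K : ℕ}

/-- indicator-product function for the first event (coords 0,1,2). -/
noncomputable def fA (k : Fin K) : (Fin 5 → ℝ × Fin K) → ℝ≥0∞ := fun z =>
  (if (z 2).1 < (z 0).1 then (1:ℝ≥0∞) else 0) * (if (z 2).1 < (z 1).1 then (1:ℝ≥0∞) else 0)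
    * (if (z 0).2 = k then (1:ℝ≥0∞) else 0) * (if (z 1).2 = k then (1:ℝ≥0∞) else 0)

/-- indicator-product function for the second event (coords 0,3,4). -/
noncomputable def fB (k : Fin K) : (Fin 5 → ℝ × Fin K) → ℝ≥0∞ := fun z =>
  (if (z 0).1 < (z 3).1 then (1:ℝ≥0∞) else 0) * (if (z 0).1 < (z 4).1 then (1:ℝ≥0∞) else 0)
    * (if (z 3).2 = k then (1:ℝ≥0∞) else 0) * (if (z 4).2 = k then (1:ℝ≥0∞) else 0)

noncomputable def fAB (k : Fin K) : (Fin 5 → ℝ × Fin K) → ℝ≥0∞ := fun z => fA k z * fB k z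

end Main

open MeasureTheory ProbabilityTheory

/-- Cov(I(min(X1,X2)>X3, Y1=Y2=k), I(min(X4,X5)>X1, Y4=Y5=k)) = −(2/45) p_k⁴. -/
theorem stmt_12 {Ω : Type*} [MeasurableSpace Ω] (P : Measure Ω) [IsProbabilityMeasure P]
    {K : ℕ} (X : Ω → ℝ) (Y : Ω → Fin K) (hX : Measurable X) (hY : Measurable Y)
    (F : ℝ → ℝ) (hF : ∀ x, F x = (P {ω | X ω ≤ x}).toReal) (hFc : Continuous F)
    (p : Fin K → ℝ) (hp : ∀ k, p k = (P {ω | Y ω = k}).toReal) (hppos : ∀ k, 0 < p k)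
    (hindXY : IndepFun X Y P)
    (Z : Fin 5 → Ω → ℝ × Fin K) (hZ : ∀ i, Measurable (Z i))
    (hindep : iIndepFun Z P)
    (hident : ∀ i, IdentDistrib (Z i) (fun ω => (X ω, Y ω)) P P) (k : Fin K) :
    (∫ ω, (if min (Z 0 ω).1 (Z 1 ω).1 > (Z 2 ω).1 ∧ (Z 0 ω).2 = k ∧ (Z 1 ω).2 = k then (1:ℝ) else 0) * (if min (Z 3 ω).1 (Z 4 ω).1 > (Z 0 ω).1 ∧ (Z 3 ω).2 = k ∧ (Z 4 ω).2 = k then (1:ℝ) else 0) ∂P)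
      - (∫ ω, (if min (Z 0 ω).1 (Z 1 ω).1 > (Z 2 ω).1 ∧ (Z 0 ω).2 = k ∧ (Z 1 ω).2 = k then (1:ℝ) else 0) ∂P) * (∫ ω, (if min (Z 3 ω).1 (Z 4 ω).1 > (Z 0 ω).1 ∧ (Z 3 ω).2 = k ∧ (Z 4 ω).2 = k then (1:ℝ) else 0) ∂P) = -(2 / 45) * p k ^ 4 := by
  classical
  set ν : Measure ℝ := P.map X with hν
  set ρ : Measure (Fin K) := P.map Y with hρ
  set μ : Measure (ℝ × Fin K) := P.map (fun ω => (X ω, Y ω)) with hμ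
  haveI : IsProbabilityMeasure ν := Measure.isProbabilityMeasure_map hX.aemeasurable
  haveI : IsProbabilityMeasure ρ := Measure.isProbabilityMeasure_map hY.aemeasurable
  haveI : IsProbabilityMeasure μ := Measure.isProbabilityMeasure_map (hX.prodMk hY).aemeasurable
  have hprod : μ = ν.prod ρ :=
    (indepFun_iff_map_prod_eq_prod_map_map hX.aemeasurable hY.aemeasurable).1 hindXY
  have hFνdef : ∀ x, F x = (ν (Set.Iic x)).toReal := by
    intro x; rw [hF x, hν, Measure.map_apply hX measurableSet_Iic]; rfl
  have hmap : ν.map F = volume.restrict (Set.Ioc 0 1) := map_cdf_unif ν F hFνdef hFc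
  have hF0 : ∀ x, 0 ≤ F x := fun x => (hFνdef x) ▸ ENNReal.toReal_nonneg
  have hF1 : ∀ x, F x ≤ 1 := fun x => by
    rw [hFνdef x]
    exact ENNReal.toReal_le_of_le_ofReal zero_le_one (by simpa using prob_le_one)
  have hmono : Monotone F := fun a b hab => by
    rw [hFνdef a, hFνdef b]
    exact ENNReal.toReal_mono (measure_ne_top _ _) (measure_mono (Iic_subset_Iic.2 hab))
  have hIic : ∀ x, ν (Iic x) = ENNReal.ofReal (F x) := fun x => by
    rw [hFνdef x, ENNReal.ofReal_toReal (measure_ne_top _ _)]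
  have hIoi : ∀ t, ν (Ioi t) = ENNReal.ofReal (1 - F t) := by
    intro t
    rw [← Set.compl_Iic, measure_compl measurableSet_Iic (measure_ne_top _ _), measure_univ,
      hIic, ENNReal.ofReal_sub 1 (hF0 t), ENNReal.ofReal_one]
  set q : ℝ≥0∞ := ρ {k} with hqdef
  have hq_ne : q ≠ ⊤ := measure_ne_top _ _
  have hq_toReal : q.toReal = p k := by
    rw [hp k, hqdef, hρ, Measure.map_apply hY (measurableSet_singleton k)]; rfl
  -- atomic lintegrals
  have hρk : ∫⁻ b, (if b = k then (1:ℝ≥0∞) else 0) ∂ρ = q := by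
    have h : ∀ b : Fin K, (if b = k then (1:ℝ≥0∞) else 0)
        = ({k} : Set (Fin K)).indicator (1 : Fin K → ℝ≥0∞) b := fun b => by
      simp [Set.indicator_apply]
    rw [lintegral_congr h, lintegral_indicator_one (measurableSet_singleton k)]
  have hIoiχ : ∀ t : ℝ, ∫⁻ a, (if t < a then (1:ℝ≥0∞) else 0) ∂ν = ENNReal.ofReal (1 - F t) := by
    intro t
    have h : ∀ a : ℝ, (if t < a then (1:ℝ≥0∞) else 0)
        = (Ioi t).indicator (1 : ℝ → ℝ≥0∞) a := fun a => by
      simp [Set.indicator_apply]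
    rw [lintegral_congr h, lintegral_indicator_one measurableSet_Ioi, hIoi]
  have hμ1 : ∀ c : ℝ, ∫⁻ z : ℝ × Fin K,
      (fun a => if c < a then (1:ℝ≥0∞) else 0) z.1
        * (fun b => if b = k then (1:ℝ≥0∞) else 0) z.2 ∂μ
      = ENNReal.ofReal (1 - F c) * q := by
    intro c
    rw [hprod, lintegral_prod_mul
      (show AEMeasurable (fun a : ℝ => if c < a then (1:ℝ≥0∞) else 0) ν from
        (Measurable.ite (measurableSet_Ioi : MeasurableSet {a : ℝ | c < a})
          measurable_const measurable_const).aemeasurable)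
      (show AEMeasurable (fun b : Fin K => if b = k then (1:ℝ≥0∞) else 0) ρ from
        (measurable_of_countable _).aemeasurable), hIoiχ, hρk]
  have hμ2 : ∀ c : ℝ, ∫⁻ z : ℝ × Fin K,
      (fun a => (if a < c then (1:ℝ≥0∞) else 0) * ENNReal.ofReal (1 - F a)) z.1
        * (fun _ : Fin K => (1:ℝ≥0∞)) z.2 ∂μ
      = ENNReal.ofReal (F c - F c * F c / 2) := by
    intro c
    rw [hprod, lintegral_prod_mul
      (show AEMeasurable
          (fun a : ℝ => (if a < c then (1:ℝ≥0∞) else 0) * ENNReal.ofReal (1 - F a)) ν from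
        ((Measurable.ite (measurableSet_Iio : MeasurableSet {a : ℝ | a < c})
          measurable_const measurable_const).mul
          (ENNReal.measurable_ofReal.comp (measurable_const.sub hFc.measurable))).aemeasurable)
      (show AEMeasurable (fun _ : Fin K => (1:ℝ≥0∞)) ρ from aemeasurable_const),
      lintegral_one, measure_univ, mul_one,
      lint_T hFc hmap hmono hF0 hF1 c]
  have hμ3 : ∫⁻ z : ℝ × Fin K,
      (fun a => ENNReal.ofReal (1 - F a) * ENNReal.ofReal (1 - F a)
        * ENNReal.ofReal (F a - F a * F a / 2)) z.1
        * (fun b => if b = k then (1:ℝ≥0∞) else 0) z.2 ∂μ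
      = ENNReal.ofReal (1/15) * q := by
    rw [hprod, lintegral_prod_mul
      (show AEMeasurable (fun a : ℝ => ENNReal.ofReal (1 - F a) * ENNReal.ofReal (1 - F a)
          * ENNReal.ofReal (F a - F a * F a / 2)) ν from (by fun_prop : Measurable
          (fun a : ℝ => ENNReal.ofReal (1 - F a) * ENNReal.ofReal (1 - F a)
          * ENNReal.ofReal (F a - F a * F a / 2))).aemeasurable)
      (show AEMeasurable (fun b : Fin K => if b = k then (1:ℝ≥0∞) else 0) ρ from
        (measurable_of_countable _).aemeasurable), hρk]
    congr 1
    have h : ∀ a : ℝ, ENNReal.ofReal (1 - F a) * ENNReal.ofReal (1 - F a)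
        * ENNReal.ofReal (F a - F a * F a / 2)
        = ENNReal.ofReal ((1 - F a) * (1 - F a) * (F a - F a * F a / 2)) := by
      intro a
      rw [ENNReal.ofReal_mul (mul_self_nonneg _),
        ENNReal.ofReal_mul (by linarith [hF1 a] : (0:ℝ) ≤ 1 - F a)]
    rw [lintegral_congr h, lint_I15 hFc hmap]
  have hμ4 : ∫⁻ z : ℝ × Fin K,
      (fun a => ENNReal.ofReal (1 - F a) * ENNReal.ofReal (1 - F a)) z.1
        * (fun _ : Fin K => (1:ℝ≥0∞)) z.2 ∂μ
      = ENNReal.ofReal (1/3) := by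
    rw [hprod, lintegral_prod_mul
      (show AEMeasurable (fun a : ℝ => ENNReal.ofReal (1 - F a) * ENNReal.ofReal (1 - F a)) ν from
        (by fun_prop : Measurable
          (fun a : ℝ => ENNReal.ofReal (1 - F a) * ENNReal.ofReal (1 - F a))).aemeasurable)
      (show AEMeasurable (fun _ : Fin K => (1:ℝ≥0∞)) ρ from aemeasurable_const),
      lintegral_one, measure_univ, mul_one]
    have h : ∀ a : ℝ, ENNReal.ofReal (1 - F a) * ENNReal.ofReal (1 - F a)
        = ENNReal.ofReal ((1 - F a) * (1 - F a)) := by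
      intro a
      rw [ENNReal.ofReal_mul (by linarith [hF1 a] : (0:ℝ) ≤ 1 - F a)]
    rw [lintegral_congr h, lint_I3 hFc hmap]
  -- joint law
  set μs : Fin 5 → Measure (ℝ × Fin K) := (fun _ => μ) with hμs
  haveI hprobi : ∀ i : Fin 5, IsProbabilityMeasure (μs i) :=
    fun i => inferInstanceAs (IsProbabilityMeasure μ)
  haveI hsigi : ∀ i : Fin 5, SigmaFinite (μs i) := fun i => inferInstance
  haveI : IsProbabilityMeasure (Measure.pi μs) := inferInstance
  set W : Ω → (Fin 5 → ℝ × Fin K) := fun ω i => Z i ω with hW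
  have hWm : Measurable W := measurable_pi_iff.2 hZ
  have hjoint : Measure.pi μs = P.map W := by
    refine Measure.pi_eq fun s hs => ?_
    rw [Measure.map_apply hWm (MeasurableSet.univ_pi hs)]
    have hpre : W ⁻¹' (Set.pi Set.univ s) = ⋂ i ∈ Finset.univ, Z i ⁻¹' s i := by
      ext ω; simp [hW, Set.mem_pi]
    rw [hpre, hindep.measure_inter_preimage_eq_mul Finset.univ (fun i _ => hs i)]
    refine Finset.prod_congr rfl fun i _ => ?_
    show P (Z i ⁻¹' s i) = Measure.map (fun ω => (X ω, Y ω)) P (s i)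
    rw [← (hident i).map_eq, Measure.map_apply (hZ i) (hs i)]
  
  -- measurability helpers
  have hmxy : ∀ i : Fin 5, Measurable fun z : Fin 5 → ℝ × Fin K => (z i).1 :=
    fun i => measurable_fst.comp (measurable_pi_apply i)
  have hmy : ∀ i : Fin 5, Measurable fun z : Fin 5 → ℝ × Fin K => (z i).2 :=
    fun i => measurable_snd.comp (measurable_pi_apply i)
  have hmlt : ∀ i j : Fin 5, Measurable fun z : Fin 5 → ℝ × Fin K =>
      (if (z i).1 < (z j).1 then (1:ℝ≥0∞) else 0) := fun i j =>
    Measurable.ite (measurableSet_lt (hmxy i) (hmxy j)) measurable_const measurable_const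
  have hmek : ∀ i : Fin 5, Measurable fun z : Fin 5 → ℝ × Fin K =>
      (if (z i).2 = k then (1:ℝ≥0∞) else 0) := fun i =>
    Measurable.ite ((hmy i) (measurableSet_singleton k)) measurable_const measurable_const
  have hfAm : Measurable (fA k) := (((hmlt 2 0).mul (hmlt 2 1)).mul (hmek 0)).mul (hmek 1)
  have hfBm : Measurable (fB k) := (((hmlt 0 3).mul (hmlt 0 4)).mul (hmek 3)).mul (hmek 4)
  have hfABm : Measurable (fAB k) := hfAm.mul hfBm
  have hfAne : ∀ x, fA k x ≠ ⊤ := fun x => ENNReal.mul_ne_top (ENNReal.mul_ne_top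
    (ENNReal.mul_ne_top chi_ne_top chi_ne_top) chi_ne_top) chi_ne_top
  -- chain for fA
  have HA1 : (∫⋯∫⁻_{1}, fA k ∂μs) = fun x =>
      ((if (x 2).1 < (x 0).1 then (1:ℝ≥0∞) else 0) * (if (x 0).2 = k then (1:ℝ≥0∞) else 0))
        * (ENNReal.ofReal (1 - F (x 2).1) * q) := by
    funext x
    simp only [lmarginal_singleton]
    have e : ∀ z : ℝ × Fin K, fA k (Function.update x 1 z)
        = ((if (x 2).1 < (x 0).1 then (1:ℝ≥0∞) else 0) * (if (x 0).2 = k then (1:ℝ≥0∞) else 0))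
          * ((if (x 2).1 < z.1 then (1:ℝ≥0∞) else 0) * (if z.2 = k then (1:ℝ≥0∞) else 0)) := by
      intro z
      simp only [fA, Function.update_self,
        Function.update_of_ne (show (0:Fin 5) ≠ 1 by decide),
        Function.update_of_ne (show (2:Fin 5) ≠ 1 by decide)]
      ring
    rw [lintegral_congr e, lintegral_const_mul' _ _ (ENNReal.mul_ne_top chi_ne_top chi_ne_top)]
    congr 1
    exact hμ1 (x 2).1
  have HA2 : (∫⋯∫⁻_(insert 0 {1}), fA k ∂μs) = fun x =>
      (ENNReal.ofReal (1 - F (x 2).1) * q) * (ENNReal.ofReal (1 - F (x 2).1) * q) := by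
    funext x
    rw [lmarginal_insert _ hfAm (by decide)]
    have e : ∀ z : ℝ × Fin K, (∫⋯∫⁻_{1}, fA k ∂μs) (Function.update x 0 z)
        = (ENNReal.ofReal (1 - F (x 2).1) * q)
          * ((if (x 2).1 < z.1 then (1:ℝ≥0∞) else 0) * (if z.2 = k then (1:ℝ≥0∞) else 0)) := by
      intro z
      simp only [HA1, Function.update_self,
        Function.update_of_ne (show (2:Fin 5) ≠ 0 by decide)]
      ring
    rw [lintegral_congr e, lintegral_const_mul' _ _
      (ENNReal.mul_ne_top ENNReal.ofReal_ne_top hq_ne)]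
    congr 1
    exact hμ1 (x 2).1
  have HA3 : (∫⋯∫⁻_(insert 2 (insert 0 {1})), fA k ∂μs) = fun _ =>
      (q * q) * ENNReal.ofReal (1/3) := by
    funext x
    rw [lmarginal_insert _ hfAm (by decide)]
    have e : ∀ z : ℝ × Fin K, (∫⋯∫⁻_(insert 0 {1}), fA k ∂μs) (Function.update x 2 z)
        = (q * q) * ((ENNReal.ofReal (1 - F z.1) * ENNReal.ofReal (1 - F z.1)) * 1) := by
      intro z
      simp only [HA2, Function.update_self]
      ring
    rw [lintegral_congr e, lintegral_const_mul' _ _ (ENNReal.mul_ne_top hq_ne hq_ne)]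
    congr 1
  -- chain for fB
  have hBne : ∀ t : ℝ, ENNReal.ofReal (1 - F t) * q ≠ ⊤ :=
    fun t => ENNReal.mul_ne_top ENNReal.ofReal_ne_top hq_ne
  have HB1 : (∫⋯∫⁻_{4}, fB k ∂μs) = fun x =>
      ((if (x 0).1 < (x 3).1 then (1:ℝ≥0∞) else 0) * (if (x 3).2 = k then (1:ℝ≥0∞) else 0))
        * (ENNReal.ofReal (1 - F (x 0).1) * q) := by
    funext x
    simp only [lmarginal_singleton]
    have e : ∀ z : ℝ × Fin K, fB k (Function.update x 4 z)
        = ((if (x 0).1 < (x 3).1 then (1:ℝ≥0∞) else 0) * (if (x 3).2 = k then (1:ℝ≥0∞) else 0))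
          * ((if (x 0).1 < z.1 then (1:ℝ≥0∞) else 0) * (if z.2 = k then (1:ℝ≥0∞) else 0)) := by
      intro z
      simp only [fB, Function.update_self,
        Function.update_of_ne (show (0:Fin 5) ≠ 4 by decide),
        Function.update_of_ne (show (3:Fin 5) ≠ 4 by decide)]
      ring
    rw [lintegral_congr e, lintegral_const_mul' _ _ (ENNReal.mul_ne_top chi_ne_top chi_ne_top)]
    congr 1
    exact hμ1 (x 0).1
  have HB2 : (∫⋯∫⁻_(insert 3 {4}), fB k ∂μs) = fun x =>
      (ENNReal.ofReal (1 - F (x 0).1) * q) * (ENNReal.ofReal (1 - F (x 0).1) * q) := by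
    funext x
    rw [lmarginal_insert _ hfBm (by decide)]
    have e : ∀ z : ℝ × Fin K, (∫⋯∫⁻_{4}, fB k ∂μs) (Function.update x 3 z)
        = (ENNReal.ofReal (1 - F (x 0).1) * q)
          * ((if (x 0).1 < z.1 then (1:ℝ≥0∞) else 0) * (if z.2 = k then (1:ℝ≥0∞) else 0)) := by
      intro z
      simp only [HB1, Function.update_self,
        Function.update_of_ne (show (0:Fin 5) ≠ 3 by decide)]
      ring
    rw [lintegral_congr e, lintegral_const_mul' _ _ (hBne _)]
    congr 1
    exact hμ1 (x 0).1
  have HB3 : (∫⋯∫⁻_(insert 0 (insert 3 {4})), fB k ∂μs) = fun _ =>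
      (q * q) * ENNReal.ofReal (1/3) := by
    funext x
    rw [lmarginal_insert _ hfBm (by decide)]
    have e : ∀ z : ℝ × Fin K, (∫⋯∫⁻_(insert 3 {4}), fB k ∂μs) (Function.update x 0 z)
        = (q * q) * ((ENNReal.ofReal (1 - F z.1) * ENNReal.ofReal (1 - F z.1)) * 1) := by
      intro z
      simp only [HB2, Function.update_self]
      ring
    rw [lintegral_congr e, lintegral_const_mul' _ _ (ENNReal.mul_ne_top hq_ne hq_ne)]
    congr 1
  -- chain for fAB
  have HG1 : (∫⋯∫⁻_{4}, fAB k ∂μs) = fun x =>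
      (fA k x * ((if (x 0).1 < (x 3).1 then (1:ℝ≥0∞) else 0)
          * (if (x 3).2 = k then (1:ℝ≥0∞) else 0)))
        * (ENNReal.ofReal (1 - F (x 0).1) * q) := by
    funext x
    simp only [lmarginal_singleton]
    have e : ∀ z : ℝ × Fin K, fAB k (Function.update x 4 z)
        = (fA k x * ((if (x 0).1 < (x 3).1 then (1:ℝ≥0∞) else 0)
            * (if (x 3).2 = k then (1:ℝ≥0∞) else 0)))
          * ((if (x 0).1 < z.1 then (1:ℝ≥0∞) else 0) * (if z.2 = k then (1:ℝ≥0∞) else 0)) := by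
      intro z
      simp only [fAB, fA, fB, Function.update_self,
        Function.update_of_ne (show (0:Fin 5) ≠ 4 by decide),
        Function.update_of_ne (show (1:Fin 5) ≠ 4 by decide),
        Function.update_of_ne (show (2:Fin 5) ≠ 4 by decide),
        Function.update_of_ne (show (3:Fin 5) ≠ 4 by decide)]
      ring
    rw [lintegral_congr e, lintegral_const_mul' _ _
      (ENNReal.mul_ne_top (hfAne x) (ENNReal.mul_ne_top chi_ne_top chi_ne_top))]
    congr 1
    exact hμ1 (x 0).1
  have HG2 : (∫⋯∫⁻_(insert 3 {4}), fAB k ∂μs) = fun x =>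
      (fA k x * (ENNReal.ofReal (1 - F (x 0).1) * q))
        * (ENNReal.ofReal (1 - F (x 0).1) * q) := by
    funext x
    rw [lmarginal_insert _ hfABm (by decide)]
    have e : ∀ z : ℝ × Fin K, (∫⋯∫⁻_{4}, fAB k ∂μs) (Function.update x 3 z)
        = (fA k x * (ENNReal.ofReal (1 - F (x 0).1) * q))
          * ((if (x 0).1 < z.1 then (1:ℝ≥0∞) else 0) * (if z.2 = k then (1:ℝ≥0∞) else 0)) := by
      intro z
      simp only [HG1, fA, Function.update_self,
        Function.update_of_ne (show (0:Fin 5) ≠ 3 by decide),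
        Function.update_of_ne (show (1:Fin 5) ≠ 3 by decide),
        Function.update_of_ne (show (2:Fin 5) ≠ 3 by decide)]
      ring
    rw [lintegral_congr e, lintegral_const_mul' _ _
      (ENNReal.mul_ne_top (hfAne x) (hBne _))]
    congr 1
    exact hμ1 (x 0).1
  have HG3 : (∫⋯∫⁻_(insert 1 (insert 3 {4})), fAB k ∂μs) = fun x =>
      ((((if (x 2).1 < (x 0).1 then (1:ℝ≥0∞) else 0) * (if (x 0).2 = k then (1:ℝ≥0∞) else 0))
          * ((ENNReal.ofReal (1 - F (x 0).1) * q) * (ENNReal.ofReal (1 - F (x 0).1) * q)))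
        * (ENNReal.ofReal (1 - F (x 2).1) * q)) := by
    funext x
    rw [lmarginal_insert _ hfABm (by decide)]
    have e : ∀ z : ℝ × Fin K, (∫⋯∫⁻_(insert 3 {4}), fAB k ∂μs) (Function.update x 1 z)
        = (((if (x 2).1 < (x 0).1 then (1:ℝ≥0∞) else 0) * (if (x 0).2 = k then (1:ℝ≥0∞) else 0))
            * ((ENNReal.ofReal (1 - F (x 0).1) * q) * (ENNReal.ofReal (1 - F (x 0).1) * q)))
          * ((if (x 2).1 < z.1 then (1:ℝ≥0∞) else 0) * (if z.2 = k then (1:ℝ≥0∞) else 0)) := by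
      intro z
      simp only [HG2, fA, Function.update_self,
        Function.update_of_ne (show (0:Fin 5) ≠ 1 by decide),
        Function.update_of_ne (show (2:Fin 5) ≠ 1 by decide)]
      ring
    rw [lintegral_congr e, lintegral_const_mul' _ _
      (ENNReal.mul_ne_top (ENNReal.mul_ne_top chi_ne_top chi_ne_top)
        (ENNReal.mul_ne_top (hBne _) (hBne _)))]
    congr 1
    exact hμ1 (x 2).1
  have HG4 : (∫⋯∫⁻_(insert 2 (insert 1 (insert 3 {4}))), fAB k ∂μs) = fun x =>
      ((if (x 0).2 = k then (1:ℝ≥0∞) else 0)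
          * ((ENNReal.ofReal (1 - F (x 0).1) * q) * (ENNReal.ofReal (1 - F (x 0).1) * q) * q))
        * ENNReal.ofReal (F (x 0).1 - F (x 0).1 * F (x 0).1 / 2) := by
    funext x
    rw [lmarginal_insert _ hfABm (by decide)]
    have e : ∀ z : ℝ × Fin K,
        (∫⋯∫⁻_(insert 1 (insert 3 {4})), fAB k ∂μs) (Function.update x 2 z)
        = ((if (x 0).2 = k then (1:ℝ≥0∞) else 0)
            * ((ENNReal.ofReal (1 - F (x 0).1) * q) * (ENNReal.ofReal (1 - F (x 0).1) * q) * q))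
          * (((if z.1 < (x 0).1 then (1:ℝ≥0∞) else 0) * ENNReal.ofReal (1 - F z.1)) * 1) := by
      intro z
      simp only [HG3, Function.update_self,
        Function.update_of_ne (show (0:Fin 5) ≠ 2 by decide)]
      ring
    rw [lintegral_congr e, lintegral_const_mul' _ _
      (ENNReal.mul_ne_top chi_ne_top (ENNReal.mul_ne_top
        (ENNReal.mul_ne_top (hBne _) (hBne _)) hq_ne))]
    congr 1
    exact hμ2 (x 0).1
  have HG5 : (∫⋯∫⁻_(insert 0 (insert 2 (insert 1 (insert 3 {4})))), fAB k ∂μs) = fun _ =>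
      (q * q * q) * (ENNReal.ofReal (1/15) * q) := by
    funext x
    rw [lmarginal_insert _ hfABm (by decide)]
    have e : ∀ z : ℝ × Fin K,
        (∫⋯∫⁻_(insert 2 (insert 1 (insert 3 {4}))), fAB k ∂μs) (Function.update x 0 z)
        = (q * q * q) * ((ENNReal.ofReal (1 - F z.1) * ENNReal.ofReal (1 - F z.1)
            * ENNReal.ofReal (F z.1 - F z.1 * F z.1 / 2))
          * (if z.2 = k then (1:ℝ≥0∞) else 0)) := by
      intro z
      simp only [HG4, Function.update_self]
      ring
    rw [lintegral_congr e, lintegral_const_mul' _ _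
      (ENNReal.mul_ne_top (ENNReal.mul_ne_top hq_ne hq_ne) hq_ne)]
    congr 1
  -- values of the three lintegrals
  have hintA : ∫⁻ z, fA k z ∂(Measure.pi μs) = (q * q) * ENNReal.ofReal (1/3) := by
    rw [lintegral_eq_of_lmarginal_eq (insert 2 (insert 0 {1})) hfAm measurable_const
      (HA3.trans (lmarginal_const' μs _ _).symm), lintegral_const, measure_univ, mul_one]
  have hintB : ∫⁻ z, fB k z ∂(Measure.pi μs) = (q * q) * ENNReal.ofReal (1/3) := by
    rw [lintegral_eq_of_lmarginal_eq (insert 0 (insert 3 {4})) hfBm measurable_const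
      (HB3.trans (lmarginal_const' μs _ _).symm), lintegral_const, measure_univ, mul_one]
  have hintAB : ∫⁻ z, fAB k z ∂(Measure.pi μs)
      = (q * q * q) * (ENNReal.ofReal (1/15) * q) := by
    rw [lintegral_eq_of_lmarginal_eq (insert 0 (insert 2 (insert 1 (insert 3 {4})))) hfABm
      measurable_const (HG5.trans (lmarginal_const' μs _ _).symm),
      lintegral_const, measure_univ, mul_one]
  -- measures of the three sets
  have hSAm : MeasurableSet {z : Fin 5 → ℝ × Fin K |
      (z 2).1 < (z 0).1 ∧ (z 2).1 < (z 1).1 ∧ (z 0).2 = k ∧ (z 1).2 = k} :=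
    (measurableSet_lt (hmxy 2) (hmxy 0)).inter ((measurableSet_lt (hmxy 2) (hmxy 1)).inter
      (((hmy 0) (measurableSet_singleton k)).inter ((hmy 1) (measurableSet_singleton k))))
  have hSBm : MeasurableSet {z : Fin 5 → ℝ × Fin K |
      (z 0).1 < (z 3).1 ∧ (z 0).1 < (z 4).1 ∧ (z 3).2 = k ∧ (z 4).2 = k} :=
    (measurableSet_lt (hmxy 0) (hmxy 3)).inter ((measurableSet_lt (hmxy 0) (hmxy 4)).inter
      (((hmy 3) (measurableSet_singleton k)).inter ((hmy 4) (measurableSet_singleton k))))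
  have hindA : ∀ z : Fin 5 → ℝ × Fin K, ({z : Fin 5 → ℝ × Fin K |
      (z 2).1 < (z 0).1 ∧ (z 2).1 < (z 1).1 ∧ (z 0).2 = k ∧ (z 1).2 = k}).indicator
      (1 : (Fin 5 → ℝ × Fin K) → ℝ≥0∞) z = fA k z := by
    intro z
    simp only [Set.indicator_apply, Set.mem_setOf_eq, fA]
    by_cases h1 : (z 2).1 < (z 0).1 <;> by_cases h2 : (z 2).1 < (z 1).1 <;>
      by_cases h3 : (z 0).2 = k <;> by_cases h4 : (z 1).2 = k <;> simp [h1, h2, h3, h4]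
  have hindB : ∀ z : Fin 5 → ℝ × Fin K, ({z : Fin 5 → ℝ × Fin K |
      (z 0).1 < (z 3).1 ∧ (z 0).1 < (z 4).1 ∧ (z 3).2 = k ∧ (z 4).2 = k}).indicator
      (1 : (Fin 5 → ℝ × Fin K) → ℝ≥0∞) z = fB k z := by
    intro z
    simp only [Set.indicator_apply, Set.mem_setOf_eq, fB]
    by_cases h1 : (z 0).1 < (z 3).1 <;> by_cases h2 : (z 0).1 < (z 4).1 <;>
      by_cases h3 : (z 3).2 = k <;> by_cases h4 : (z 4).2 = k <;> simp [h1, h2, h3, h4]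
  have hmeasA : Measure.pi μs {z : Fin 5 → ℝ × Fin K |
      (z 2).1 < (z 0).1 ∧ (z 2).1 < (z 1).1 ∧ (z 0).2 = k ∧ (z 1).2 = k}
      = (q * q) * ENNReal.ofReal (1/3) := by
    rw [← lintegral_indicator_one hSAm, lintegral_congr hindA, hintA]
  have hmeasB : Measure.pi μs {z : Fin 5 → ℝ × Fin K |
      (z 0).1 < (z 3).1 ∧ (z 0).1 < (z 4).1 ∧ (z 3).2 = k ∧ (z 4).2 = k}
      = (q * q) * ENNReal.ofReal (1/3) := by
    rw [← lintegral_indicator_one hSBm, lintegral_congr hindB, hintB]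
  have hmeasAB : Measure.pi μs ({z : Fin 5 → ℝ × Fin K |
      (z 2).1 < (z 0).1 ∧ (z 2).1 < (z 1).1 ∧ (z 0).2 = k ∧ (z 1).2 = k} ∩
      {z : Fin 5 → ℝ × Fin K |
      (z 0).1 < (z 3).1 ∧ (z 0).1 < (z 4).1 ∧ (z 3).2 = k ∧ (z 4).2 = k})
      = (q * q * q) * (ENNReal.ofReal (1/15) * q) := by
    rw [← lintegral_indicator_one (hSAm.inter hSBm)]
    have h : ∀ z : Fin 5 → ℝ × Fin K, (({z : Fin 5 → ℝ × Fin K |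
        (z 2).1 < (z 0).1 ∧ (z 2).1 < (z 1).1 ∧ (z 0).2 = k ∧ (z 1).2 = k} ∩
        {z : Fin 5 → ℝ × Fin K |
        (z 0).1 < (z 3).1 ∧ (z 0).1 < (z 4).1 ∧ (z 3).2 = k ∧ (z 4).2 = k})).indicator
        (1 : (Fin 5 → ℝ × Fin K) → ℝ≥0∞) z = fAB k z := by
      intro z
      rw [Set.inter_indicator_one, Pi.mul_apply, hindA z, hindB z]; rfl
    rw [lintegral_congr h, hintAB]
  -- convert Bochner integrals
  have key : ∀ (S : Set (Fin 5 → ℝ × Fin K)), MeasurableSet S →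
      ∀ (g : Ω → ℝ), (∀ ω, g ω = if W ω ∈ S then (1:ℝ) else 0) →
      ∫ ω, g ω ∂P = (Measure.pi μs S).toReal := by
    intro S hS g hg
    have h1 : ∀ ω, g ω = (W ⁻¹' S).indicator (fun _ => (1:ℝ)) ω := by
      intro ω; rw [hg ω, Set.indicator_apply]; rfl
    rw [integral_congr_ae (ae_of_all _ h1), integral_indicator_const (1:ℝ) (hWm hS),
      smul_eq_mul, mul_one, Measure.real, ← Measure.map_apply hWm hS, ← hjoint]
  have E2 : ∫ ω, (if min (Z 0 ω).1 (Z 1 ω).1 > (Z 2 ω).1 ∧ (Z 0 ω).2 = k ∧ (Z 1 ω).2 = k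
      then (1:ℝ) else 0) ∂P = ((q * q) * ENNReal.ofReal (1/3)).toReal := by
    rw [key {z : Fin 5 → ℝ × Fin K |
        (z 2).1 < (z 0).1 ∧ (z 2).1 < (z 1).1 ∧ (z 0).2 = k ∧ (z 1).2 = k} hSAm _
      (fun ω => by
        have hiff : (min (Z 0 ω).1 (Z 1 ω).1 > (Z 2 ω).1 ∧ (Z 0 ω).2 = k ∧ (Z 1 ω).2 = k)
            ↔ W ω ∈ {z : Fin 5 → ℝ × Fin K |
            (z 2).1 < (z 0).1 ∧ (z 2).1 < (z 1).1 ∧ (z 0).2 = k ∧ (z 1).2 = k} := by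
          simp only [Set.mem_setOf_eq, hW, gt_iff_lt, lt_min_iff]
          tauto
        by_cases h : W ω ∈ {z : Fin 5 → ℝ × Fin K |
            (z 2).1 < (z 0).1 ∧ (z 2).1 < (z 1).1 ∧ (z 0).2 = k ∧ (z 1).2 = k}
        · rw [if_pos h, if_pos (hiff.2 h)]
        · rw [if_neg h, if_neg (fun hc => h (hiff.1 hc))]), hmeasA]
  have E3 : ∫ ω, (if min (Z 3 ω).1 (Z 4 ω).1 > (Z 0 ω).1 ∧ (Z 3 ω).2 = k ∧ (Z 4 ω).2 = k
      then (1:ℝ) else 0) ∂P = ((q * q) * ENNReal.ofReal (1/3)).toReal := by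
    rw [key {z : Fin 5 → ℝ × Fin K |
        (z 0).1 < (z 3).1 ∧ (z 0).1 < (z 4).1 ∧ (z 3).2 = k ∧ (z 4).2 = k} hSBm _
      (fun ω => by
        have hiff : (min (Z 3 ω).1 (Z 4 ω).1 > (Z 0 ω).1 ∧ (Z 3 ω).2 = k ∧ (Z 4 ω).2 = k)
            ↔ W ω ∈ {z : Fin 5 → ℝ × Fin K |
            (z 0).1 < (z 3).1 ∧ (z 0).1 < (z 4).1 ∧ (z 3).2 = k ∧ (z 4).2 = k} := by
          simp only [Set.mem_setOf_eq, hW, gt_iff_lt, lt_min_iff]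
          tauto
        by_cases h : W ω ∈ {z : Fin 5 → ℝ × Fin K |
            (z 0).1 < (z 3).1 ∧ (z 0).1 < (z 4).1 ∧ (z 3).2 = k ∧ (z 4).2 = k}
        · rw [if_pos h, if_pos (hiff.2 h)]
        · rw [if_neg h, if_neg (fun hc => h (hiff.1 hc))]), hmeasB]
  have E1 : ∫ ω, (if min (Z 0 ω).1 (Z 1 ω).1 > (Z 2 ω).1 ∧ (Z 0 ω).2 = k ∧ (Z 1 ω).2 = k
        then (1:ℝ) else 0)
      * (if min (Z 3 ω).1 (Z 4 ω).1 > (Z 0 ω).1 ∧ (Z 3 ω).2 = k ∧ (Z 4 ω).2 = k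
        then (1:ℝ) else 0) ∂P
      = ((q * q * q) * (ENNReal.ofReal (1/15) * q)).toReal := by
    rw [key ({z : Fin 5 → ℝ × Fin K |
        (z 2).1 < (z 0).1 ∧ (z 2).1 < (z 1).1 ∧ (z 0).2 = k ∧ (z 1).2 = k} ∩
        {z : Fin 5 → ℝ × Fin K |
        (z 0).1 < (z 3).1 ∧ (z 0).1 < (z 4).1 ∧ (z 3).2 = k ∧ (z 4).2 = k})
      (hSAm.inter hSBm) _
      (fun ω => by
        have hiff : ((min (Z 0 ω).1 (Z 1 ω).1 > (Z 2 ω).1 ∧ (Z 0 ω).2 = k ∧ (Z 1 ω).2 = k)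
            ∧ (min (Z 3 ω).1 (Z 4 ω).1 > (Z 0 ω).1 ∧ (Z 3 ω).2 = k ∧ (Z 4 ω).2 = k))
            ↔ W ω ∈ ({z : Fin 5 → ℝ × Fin K |
            (z 2).1 < (z 0).1 ∧ (z 2).1 < (z 1).1 ∧ (z 0).2 = k ∧ (z 1).2 = k} ∩
            {z : Fin 5 → ℝ × Fin K |
            (z 0).1 < (z 3).1 ∧ (z 0).1 < (z 4).1 ∧ (z 3).2 = k ∧ (z 4).2 = k}) := by
          simp only [Set.mem_inter_iff, Set.mem_setOf_eq, hW, gt_iff_lt, lt_min_iff]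
          tauto
        by_cases hA : (min (Z 0 ω).1 (Z 1 ω).1 > (Z 2 ω).1 ∧ (Z 0 ω).2 = k ∧ (Z 1 ω).2 = k) <;>
          by_cases hB : (min (Z 3 ω).1 (Z 4 ω).1 > (Z 0 ω).1 ∧ (Z 3 ω).2 = k ∧ (Z 4 ω).2 = k)
        · rw [if_pos hA, if_pos hB, if_pos (hiff.1 ⟨hA, hB⟩), one_mul]
        · rw [if_pos hA, if_neg hB, if_neg (fun hc => hB (hiff.2 hc).2), mul_zero]
        · rw [if_neg hA, if_pos hB, if_neg (fun hc => hA (hiff.2 hc).1), zero_mul]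
        · rw [if_neg hA, if_neg hB, if_neg (fun hc => hA (hiff.2 hc).1), zero_mul]), hmeasAB]
  rw [E1, E2, E3]
  have h13 : (ENNReal.ofReal (1/3)).toReal = 1/3 := ENNReal.toReal_ofReal (by norm_num)
  have h115 : (ENNReal.ofReal (1/15)).toReal = 1/15 := ENNReal.toReal_ofReal (by norm_num)
  simp only [ENNReal.toReal_mul, h13, h115, hq_toReal]
  ring
end

section
/- Under independence of X (continuous) and Y (categorical, P(Y = k) = p_k), for i.i.d. copies (Xi, Yi): Cov( I(min(X2,X3) > X1, Y2 = Y3 = k), I(min(X4,X5) > X1, Y4 = Y5 = k) ) = (4/45) p_k⁴. -/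
open MeasureTheory ProbabilityTheory Set

lemma aux_map_cdf (μ : Measure ℝ) [IsProbabilityMeasure μ] (F : ℝ → ℝ)
    (hF : ∀ x, F x = (μ (Set.Iic x)).toReal) (hFc : Continuous F) :
    μ.map F = volume.restrict (Set.Ioc (0:ℝ) 1) := by
  have hFmono : Monotone F := fun x y hxy => by
    rw [hF, hF]
    exact ENNReal.toReal_mono (measure_ne_top μ _) (measure_mono (Iic_subset_Iic.2 hxy))
  have hF0 : ∀ x, 0 ≤ F x := fun x => by rw [hF]; exact ENNReal.toReal_nonneg
  have hF1 : ∀ x, F x ≤ 1 := fun x => by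
    rw [hF]
    exact le_trans (ENNReal.toReal_mono (measure_ne_top μ _) (measure_mono (subset_univ _))) (by simp)
  have htop : Filter.Tendsto F Filter.atTop (nhds 1) := by
    have h1 := tendsto_measure_Iic_atTop (μ := μ)
    have h2 : Filter.Tendsto (fun x => (μ (Iic x)).toReal) Filter.atTop (nhds ((μ univ).toReal)) :=
      (ENNReal.tendsto_toReal (measure_ne_top μ _)).comp h1
    have h3 : ∀ x, (μ (Iic x)).toReal = F x := fun x => (hF x).symm
    rw [show (1:ℝ) = (μ univ).toReal by simp]
    exact h2.congr h3
  have hbot : Filter.Tendsto F Filter.atBot (nhds 0) := by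
    have hempty : (⋂ x : ℝ, Iic x) = (∅ : Set ℝ) := by
      ext y; simp only [mem_iInter, mem_Iic, mem_empty_iff_false, iff_false, not_forall, not_le]
      exact ⟨y - 1, by linarith⟩
    have h1 : Filter.Tendsto (fun x => μ (Iic x)) Filter.atBot (nhds (μ (⋂ x : ℝ, Iic x))) :=
      tendsto_measure_iInter_atBot (fun x => measurableSet_Iic.nullMeasurableSet)
        (fun x y hxy => Iic_subset_Iic.2 hxy) ⟨0, measure_ne_top μ _⟩
    rw [hempty, measure_empty] at h1
    have h2 : Filter.Tendsto (fun x => (μ (Iic x)).toReal) Filter.atBot (nhds ((0:ENNReal)).toReal) :=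
      (ENNReal.tendsto_toReal (by simp)).comp h1
    have h3 : ∀ x, (μ (Iic x)).toReal = F x := fun x => (hF x).symm
    simpa using h2.congr h3
  have key : ∀ s : ℝ, 0 ≤ s → s < 1 → μ {x | F x ≤ s} = ENNReal.ofReal s := by
    intro s hs0 hs1
    set A := {x | F x ≤ s} with hA
    have hclosed : IsClosed A := isClosed_le hFc continuous_const
    by_cases hne : A.Nonempty
    · have hbdd : BddAbove A := by
        obtain ⟨b, hb⟩ : ∃ b, s < F b := by
          rcases (htop.eventually (eventually_gt_nhds hs1)).exists with ⟨b, hb⟩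
          exact ⟨b, hb⟩
        refine ⟨b, fun x hx => ?_⟩
        by_contra hxb
        exact absurd (hFmono (le_of_not_ge hxb)) (not_le.2 (lt_of_le_of_lt hx hb))
      set a := sSup A with ha
      have haA : a ∈ A := hclosed.csSup_mem hne hbdd
      have hAIic : A = Iic a := by
        apply Set.Subset.antisymm
        · exact fun x hx => le_csSup hbdd hx
        · exact fun x hx => le_trans (hFmono hx) haA
      have hFa : F a = s := by
        refine le_antisymm haA ?_
        have h1 : Filter.Tendsto F (nhdsWithin a (Ioi a)) (nhds (F a)) :=
          (hFc.tendsto a).mono_left nhdsWithin_le_nhds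
        refine ge_of_tendsto h1 ?_
        filter_upwards [self_mem_nhdsWithin] with x hx
        have hxA : x ∉ A := by
          rw [hAIic]; exact not_le.2 (show a < x from hx)
        have hx' : ¬ F x ≤ s := hxA
        exact (not_le.1 hx').le
      rw [hAIic]
      have := hF a
      rw [hFa] at this
      rw [← ENNReal.ofReal_toReal (measure_ne_top μ (Iic a)), ← this]
    · rw [not_nonempty_iff_eq_empty] at hne
      rw [hne, measure_empty]
      have hs0' : s ≤ 0 := by
        by_contra hs
        push_neg at hs
        rcases (hbot.eventually (eventually_lt_nhds hs)).exists with ⟨x, hx⟩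
        have : x ∈ A := hx.le
        rw [hne] at this
        exact this
      rw [le_antisymm hs0' hs0]
      simp
  refine Measure.ext_of_Iic (μ.map F) _ (fun s => ?_)
  rw [Measure.map_apply hFc.measurable measurableSet_Iic]
  rw [Measure.restrict_apply measurableSet_Iic]
  rcases lt_or_ge s 0 with hs | hs
  · have : F ⁻¹' Iic s = ∅ := by
      ext x; simp only [mem_preimage, mem_Iic, mem_empty_iff_false, iff_false, not_le]
      exact lt_of_lt_of_le hs (hF0 x)
    rw [this, measure_empty]
    have : Iic s ∩ Ioc 0 1 = ∅ := by
      ext x; simp only [mem_inter_iff, mem_Iic, mem_Ioc, mem_empty_iff_false, iff_false]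
      rintro ⟨h1, h2, _⟩; exact absurd (lt_of_lt_of_le h2 h1) (not_lt.2 hs.le)
    rw [this, measure_empty]
  rcases lt_or_ge s 1 with hs1 | hs1
  · have hpre : F ⁻¹' Iic s = {x | F x ≤ s} := rfl
    rw [hpre, key s hs hs1]
    have : Iic s ∩ Ioc 0 1 = Ioc 0 s := by
      ext x; simp only [mem_inter_iff, mem_Iic, mem_Ioc]
      constructor
      · rintro ⟨h1, h2, _⟩; exact ⟨h2, h1⟩
      · rintro ⟨h1, h2⟩; exact ⟨h2, h1, le_trans h2 hs1.le⟩
    rw [this, Real.volume_Ioc]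
    simp
  · have : F ⁻¹' Iic s = univ := by
      ext x; simp only [mem_preimage, mem_Iic, mem_univ, iff_true]
      exact le_trans (hF1 x) hs1
    rw [this, measure_univ]
    have : Iic s ∩ Ioc 0 1 = Ioc 0 1 := inter_eq_self_of_subset_right (fun x hx => le_trans hx.2 hs1)
    rw [this, Real.volume_Ioc]
    simp

lemma aux_int_pow (n : ℕ) : (∫ u in Set.Ioc (0:ℝ) 1, (1 - u)^n) = 1/(n+1) := by
  rw [← intervalIntegral.integral_of_le zero_le_one]
  have : (∫ x in (0:ℝ)..1, (1 - x)^n) = ∫ x in (1-(1:ℝ))..(1-(0:ℝ)), x^n := by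
    exact intervalIntegral.integral_comp_sub_left (fun x => x^n) 1
  rw [this]
  norm_num [integral_pow]

lemma aux_joint_map {Ω : Type*} [MeasurableSpace Ω] (P : Measure Ω) [IsProbabilityMeasure P]
    {n : ℕ} {α : Type*} [MeasurableSpace α] (Z : Fin n → Ω → α) (hZ : ∀ i, Measurable (Z i))
    (hindep : iIndepFun Z P) :
    P.map (fun ω i => Z i ω) = Measure.pi (fun i => P.map (Z i)) := by
  have : ∀ i, SigmaFinite (P.map (Z i)) := fun i => by
    have : IsProbabilityMeasure (P.map (Z i)) := Measure.isProbabilityMeasure_map (hZ i).aemeasurable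
    infer_instance
  refine (Measure.pi_eq fun s hs => ?_).symm
  rw [Measure.map_apply (measurable_pi_iff.2 hZ) (MeasurableSet.univ_pi hs)]
  have hset : (fun ω i => Z i ω) ⁻¹' Set.pi Set.univ s = ⋂ i ∈ Finset.univ, Z i ⁻¹' s i := by
    ext ω; simp [Set.mem_pi]
  rw [hset, hindep.measure_inter_preimage_eq_mul Finset.univ (fun i _ => hs i)]
  exact Finset.prod_congr rfl fun i _ => (Measure.map_apply (hZ i) (hs i)).symm

lemma aux_pi_pow {E : Type*} [MeasurableSpace E] (ν : Measure E) [IsProbabilityMeasure ν]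
    (f : E → ℝ) (act : Finset (Fin 4)) :
    (∫ w, ∏ i ∈ act, f (w i) ∂(Measure.pi (fun _ : Fin 4 => ν))) = (∫ x, f x ∂ν) ^ act.card := by
  letI : MeasureSpace E := ⟨ν⟩
  have hvol : (Measure.pi fun _ : Fin 4 => ν) = (volume : Measure (Fin 4 → E)) := rfl
  rw [hvol]
  have heq : ∀ w : Fin 4 → E, (∏ i ∈ act, f (w i)) =
      ∏ i : Fin 4, (if i ∈ act then f (w i) else 1) := by
    intro w
    rw [Finset.prod_ite_mem, Finset.univ_inter]
  simp_rw [heq]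
  rw [show (volume : Measure (Fin 4 → E)) = Measure.pi (fun _ => (volume : Measure E)) from rfl,
    integral_fintype_prod_eq_prod (ι := Fin 4) (fun i (x : E) => if i ∈ act then f x else 1)]
  have : ∀ i : Fin 4, (∫ x : E, if i ∈ act then f x else 1) = if i ∈ act then (∫ x, f x ∂ν) else 1 := by
    intro i
    split_ifs
    · rfl
    · rw [hvol.symm] at *
      simp
  simp_rw [this]
  rw [Finset.prod_ite_mem, Finset.univ_inter, Finset.prod_const]

lemma aux_fubini {E : Type*} [MeasurableSpace E] (ν : Measure E) [IsProbabilityMeasure ν]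
    (g : E → E → ℝ) (hg : Measurable (Function.uncurry g))
    (hg0 : ∀ z w, 0 ≤ g z w) (hg1 : ∀ z w, g z w ≤ 1) (act : Finset (Fin 4)) :
    (∫ y, ∏ i ∈ act, g (y 0) (y i.succ) ∂(Measure.pi (fun _ : Fin 5 => ν))) =
      ∫ z, (∫ w, g z w ∂ν) ^ act.card ∂ν := by
  have h1 := (measurePreserving_piFinSuccAbove (fun _ : Fin 5 => ν) 0).symm
  rw [← h1.integral_comp' (fun y => ∏ i ∈ act, g (y 0) (y i.succ))]
  have heq : ∀ x : E × (Fin 4 → E),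
      (∏ i ∈ act, g ((MeasurableEquiv.piFinSuccAbove (fun _ : Fin 5 => E) 0).symm x 0)
        ((MeasurableEquiv.piFinSuccAbove (fun _ : Fin 5 => E) 0).symm x i.succ))
      = ∏ i ∈ act, g x.1 (x.2 i) := by
    intro x
    simp [MeasurableEquiv.piFinSuccAbove_symm_apply, Fin.insertNthEquiv, Fin.insertNth_zero,
      Fin.zero_succAbove]
  simp_rw [heq]
  have hmeas : Measurable (fun x : E × (Fin 4 → E) => ∏ i ∈ act, g x.1 (x.2 i)) := by
    apply Finset.measurable_prod
    intro i _
    exact hg.comp (measurable_fst.prodMk ((measurable_pi_apply i).comp measurable_snd))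
  have hint : Integrable (fun x : E × (Fin 4 → E) => ∏ i ∈ act, g x.1 (x.2 i))
      (ν.prod (Measure.pi (fun _ : Fin 4 => ν))) := by
    refine Integrable.mono' (integrable_const 1) hmeas.aestronglyMeasurable ?_
    refine Filter.Eventually.of_forall fun x => ?_
    rw [Real.norm_eq_abs, abs_of_nonneg (Finset.prod_nonneg fun i _ => hg0 _ _)]
    exact Finset.prod_le_one (fun i _ => hg0 _ _) (fun i _ => hg1 _ _)
  rw [MeasureTheory.integral_prod _ hint]
  refine integral_congr_ae (Filter.Eventually.of_forall fun z => ?_)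
  exact aux_pi_pow ν (g z) act

/-- Cov(I(min(X2,X3)>X1, Y2=Y3=k), I(min(X4,X5)>X1, Y4=Y5=k)) = (4/45) p_k⁴. -/
theorem stmt_13 {Ω : Type*} [MeasurableSpace Ω] (P : Measure Ω) [IsProbabilityMeasure P]
    {K : ℕ} (X : Ω → ℝ) (Y : Ω → Fin K) (hX : Measurable X) (hY : Measurable Y)
    (F : ℝ → ℝ) (hF : ∀ x, F x = (P {ω | X ω ≤ x}).toReal) (hFc : Continuous F)
    (p : Fin K → ℝ) (hp : ∀ k, p k = (P {ω | Y ω = k}).toReal) (hppos : ∀ k, 0 < p k)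
    (hindXY : IndepFun X Y P)
    (Z : Fin 5 → Ω → ℝ × Fin K) (hZ : ∀ i, Measurable (Z i))
    (hindep : iIndepFun Z P)
    (hident : ∀ i, IdentDistrib (Z i) (fun ω => (X ω, Y ω)) P P) (k : Fin K) :
    (∫ ω, (if min (Z 1 ω).1 (Z 2 ω).1 > (Z 0 ω).1 ∧ (Z 1 ω).2 = k ∧ (Z 2 ω).2 = k then (1:ℝ) else 0) * (if min (Z 3 ω).1 (Z 4 ω).1 > (Z 0 ω).1 ∧ (Z 3 ω).2 = k ∧ (Z 4 ω).2 = k then (1:ℝ) else 0) ∂P)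
      - (∫ ω, (if min (Z 1 ω).1 (Z 2 ω).1 > (Z 0 ω).1 ∧ (Z 1 ω).2 = k ∧ (Z 2 ω).2 = k then (1:ℝ) else 0) ∂P) * (∫ ω, (if min (Z 3 ω).1 (Z 4 ω).1 > (Z 0 ω).1 ∧ (Z 3 ω).2 = k ∧ (Z 4 ω).2 = k then (1:ℝ) else 0) ∂P) = (4 / 45) * p k ^ 4 := by
  classical
  have hXY : Measurable fun ω => (X ω, Y ω) := hX.prodMk hY
  set ν : Measure (ℝ × Fin K) := P.map (fun ω => (X ω, Y ω)) with hν
  haveI : IsProbabilityMeasure ν := Measure.isProbabilityMeasure_map hXY.aemeasurable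
  haveI : IsProbabilityMeasure (P.map X) := Measure.isProbabilityMeasure_map hX.aemeasurable
  set g : (ℝ × Fin K) → (ℝ × Fin K) → ℝ :=
    fun z w => if z.1 < w.1 ∧ w.2 = k then 1 else 0 with hgdef
  have hg0 : ∀ z w, 0 ≤ g z w := by
    intro z w; rw [hgdef]; dsimp only; split_ifs <;> norm_num
  have hg1 : ∀ z w, g z w ≤ 1 := by
    intro z w; rw [hgdef]; dsimp only; split_ifs <;> norm_num
  have hgmeas : Measurable (Function.uncurry g) := by
    have hS : MeasurableSet {q : (ℝ × Fin K) × (ℝ × Fin K) | q.1.1 < q.2.1 ∧ q.2.2 = k} := by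
      refine (measurableSet_lt (measurable_fst.fst) (measurable_snd.fst)).inter ?_
      exact (measurable_snd.snd) (measurableSet_singleton k)
    have : Function.uncurry g =
        Set.indicator {q : (ℝ × Fin K) × (ℝ × Fin K) | q.1.1 < q.2.1 ∧ q.2.2 = k}
          (fun _ => (1:ℝ)) := by
      ext q
      rw [Set.indicator_apply]
      rfl
    rw [this]
    exact measurable_const.indicator hS
  -- value of the inner integral
  have hgint : ∀ z : ℝ × Fin K, (∫ w, g z w ∂ν) = (1 - F z.1) * p k := by
    intro z
    have hset : MeasurableSet {w : ℝ × Fin K | z.1 < w.1 ∧ w.2 = k} :=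
      (measurableSet_lt measurable_const measurable_fst).inter
        (measurable_snd (measurableSet_singleton k))
    have h1 : (∫ w, g z w ∂ν)
        = ∫ w, Set.indicator {w : ℝ × Fin K | z.1 < w.1 ∧ w.2 = k} 1 w ∂ν := by
      refine integral_congr_ae (Filter.Eventually.of_forall fun w => ?_)
      rw [Set.indicator_apply, hgdef]
      by_cases h : z.1 < w.1 ∧ w.2 = k <;> simp [h]
    rw [h1, integral_indicator_one hset]
    have hνset : ν {w : ℝ × Fin K | z.1 < w.1 ∧ w.2 = k}
        = P (X ⁻¹' Set.Ioi z.1) * P (Y ⁻¹' {k}) := by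
      rw [hν, Measure.map_apply hXY hset]
      have hpre : (fun ω => (X ω, Y ω)) ⁻¹' {w : ℝ × Fin K | z.1 < w.1 ∧ w.2 = k}
          = X ⁻¹' Set.Ioi z.1 ∩ Y ⁻¹' {k} := by
        ext ω; simp [Set.mem_Ioi]
      rw [hpre]
      exact hindXY.measure_inter_preimage_eq_mul _ _ measurableSet_Ioi (measurableSet_singleton k)
    rw [measureReal_def, hνset, ENNReal.toReal_mul]
    congr 1
    · have hcompl : X ⁻¹' Set.Ioi z.1 = {ω | X ω ≤ z.1}ᶜ := by
        ext ω; simp [Set.mem_Ioi, not_le]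
      have hms : MeasurableSet {ω | X ω ≤ z.1} := hX measurableSet_Iic
      rw [hcompl, measure_compl hms (measure_ne_top P _), measure_univ]
      rw [ENNReal.toReal_sub_of_le prob_le_one ENNReal.one_ne_top, ENNReal.toReal_one, hF]
    · rw [hp]
      rfl
  -- the moment computation
  have hF' : ∀ x, F x = ((P.map X) (Set.Iic x)).toReal := by
    intro x
    rw [hF, Measure.map_apply hX measurableSet_Iic]
    rfl
  have hmom : ∀ n : ℕ, (∫ z : ℝ × Fin K, (1 - F z.1)^n ∂ν) = 1/((n:ℝ)+1) := by
    intro n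
    have hmeasf : Measurable (fun x : ℝ => (1 - F x)^n) := by
      exact ((measurable_const.sub hFc.measurable).pow_const n)
    have hmeasf' : Measurable (fun u : ℝ => (1 - u)^n) := by
      exact ((measurable_const.sub measurable_id).pow_const n)
    have hXmap : ν.map Prod.fst = P.map X := by
      rw [hν, Measure.map_map measurable_fst hXY]
      rfl
    calc (∫ z : ℝ × Fin K, (1 - F z.1)^n ∂ν)
        = ∫ x, (1 - F x)^n ∂(ν.map Prod.fst) := by
          rw [integral_map measurable_fst.aemeasurable hmeasf.aestronglyMeasurable]
      _ = ∫ x, (1 - F x)^n ∂(P.map X) := by rw [hXmap]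
      _ = ∫ u, (1 - u)^n ∂((P.map X).map F) := by
          rw [integral_map hFc.measurable.aemeasurable hmeasf'.aestronglyMeasurable]
      _ = ∫ u in Set.Ioc (0:ℝ) 1, (1-u)^n := by rw [aux_map_cdf (P.map X) F hF' hFc]
      _ = 1/((n:ℝ)+1) := aux_int_pow n
  -- joint distribution
  have hjoint : P.map (fun ω i => Z i ω) = Measure.pi (fun _ : Fin 5 => ν) := by
    rw [aux_joint_map P Z hZ hindep]
    congr 1
    funext i
    exact (hident i).map_eq
  -- key expectation formula
  have hkey : ∀ act : Finset (Fin 4), (∫ ω, ∏ i ∈ act, g (Z 0 ω) (Z i.succ ω) ∂P)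
      = (p k)^act.card * (1/((act.card : ℝ) + 1)) := by
    intro act
    have hΦmeas : Measurable (fun y : Fin 5 → ℝ × Fin K => ∏ i ∈ act, g (y 0) (y i.succ)) := by
      refine Finset.measurable_prod _ fun i _ => ?_
      have hco : (fun y : Fin 5 → ℝ × Fin K => g (y 0) (y i.succ))
          = Function.uncurry g ∘ (fun y => (y 0, y i.succ)) := rfl
      rw [hco]
      exact hgmeas.comp ((measurable_pi_apply 0).prodMk (measurable_pi_apply i.succ))
    have h0 : (∫ ω, ∏ i ∈ act, g (Z 0 ω) (Z i.succ ω) ∂P)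
        = ∫ y, ∏ i ∈ act, g (y 0) (y i.succ) ∂(Measure.pi (fun _ : Fin 5 => ν)) := by
      rw [← hjoint,
        integral_map (measurable_pi_iff.2 hZ).aemeasurable hΦmeas.aestronglyMeasurable]
    rw [h0, aux_fubini ν g hgmeas hg0 hg1 act]
    have heq2 : ∀ z : ℝ × Fin K, (∫ w, g z w ∂ν) ^ act.card
        = (p k)^act.card * (1 - F z.1)^act.card := by
      intro z; rw [hgint z, mul_pow, mul_comm]
    simp_rw [heq2]
    rw [integral_const_mul, hmom act.card]
  -- rewrite integrands
  have hsucc0 : (0 : Fin 4).succ = (1 : Fin 5) := by decide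
  have hsucc1 : (1 : Fin 4).succ = (2 : Fin 5) := by decide
  have hsucc2 : (2 : Fin 4).succ = (3 : Fin 5) := by decide
  have hsucc3 : (3 : Fin 4).succ = (4 : Fin 5) := by decide
  have e1 : ∀ ω, (if min (Z 1 ω).1 (Z 2 ω).1 > (Z 0 ω).1 ∧ (Z 1 ω).2 = k ∧ (Z 2 ω).2 = k
        then (1:ℝ) else 0)
      = ∏ i ∈ ({0, 1} : Finset (Fin 4)), g (Z 0 ω) (Z i.succ ω) := by
    intro ω
    rw [Finset.prod_pair (by decide), hsucc0, hsucc1, hgdef]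
    dsimp only
    by_cases h1 : (Z 0 ω).1 < (Z 1 ω).1 <;> by_cases h2 : (Z 0 ω).1 < (Z 2 ω).1 <;>
      by_cases h3 : (Z 1 ω).2 = k <;> by_cases h4 : (Z 2 ω).2 = k <;>
      simp [lt_min_iff, h1, h2, h3, h4]
  have e2 : ∀ ω, (if min (Z 3 ω).1 (Z 4 ω).1 > (Z 0 ω).1 ∧ (Z 3 ω).2 = k ∧ (Z 4 ω).2 = k
        then (1:ℝ) else 0)
      = ∏ i ∈ ({2, 3} : Finset (Fin 4)), g (Z 0 ω) (Z i.succ ω) := by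
    intro ω
    rw [Finset.prod_pair (by decide), hsucc2, hsucc3, hgdef]
    dsimp only
    by_cases h1 : (Z 0 ω).1 < (Z 3 ω).1 <;> by_cases h2 : (Z 0 ω).1 < (Z 4 ω).1 <;>
      by_cases h3 : (Z 3 ω).2 = k <;> by_cases h4 : (Z 4 ω).2 = k <;>
      simp [lt_min_iff, h1, h2, h3, h4]
  have hunion : ({0, 1} : Finset (Fin 4)) ∪ ({2, 3} : Finset (Fin 4)) = Finset.univ := by decide
  have hdisj : Disjoint ({0, 1} : Finset (Fin 4)) ({2, 3} : Finset (Fin 4)) := by decide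
  have eAB : ∀ ω, (if min (Z 1 ω).1 (Z 2 ω).1 > (Z 0 ω).1 ∧ (Z 1 ω).2 = k ∧ (Z 2 ω).2 = k
        then (1:ℝ) else 0) * (if min (Z 3 ω).1 (Z 4 ω).1 > (Z 0 ω).1 ∧ (Z 3 ω).2 = k ∧ (Z 4 ω).2 = k
        then (1:ℝ) else 0)
      = ∏ i ∈ (Finset.univ : Finset (Fin 4)), g (Z 0 ω) (Z i.succ ω) := by
    intro ω
    rw [e1 ω, e2 ω, ← Finset.prod_union hdisj, hunion]
  have hintAB : (∫ ω, (if min (Z 1 ω).1 (Z 2 ω).1 > (Z 0 ω).1 ∧ (Z 1 ω).2 = k ∧ (Z 2 ω).2 = k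
        then (1:ℝ) else 0) * (if min (Z 3 ω).1 (Z 4 ω).1 > (Z 0 ω).1 ∧ (Z 3 ω).2 = k ∧
        (Z 4 ω).2 = k then (1:ℝ) else 0) ∂P) = (p k)^4 * (1/5) := by
    rw [integral_congr_ae (Filter.Eventually.of_forall eAB), hkey Finset.univ]
    have hcard : (Finset.univ : Finset (Fin 4)).card = 4 := by decide
    rw [hcard]
    norm_num
  have hintA : (∫ ω, (if min (Z 1 ω).1 (Z 2 ω).1 > (Z 0 ω).1 ∧ (Z 1 ω).2 = k ∧ (Z 2 ω).2 = k
        then (1:ℝ) else 0) ∂P) = (p k)^2 * (1/3) := by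
    rw [integral_congr_ae (Filter.Eventually.of_forall e1), hkey ({0,1} : Finset (Fin 4))]
    have hcard : ({0,1} : Finset (Fin 4)).card = 2 := by decide
    rw [hcard]
    norm_num
  have hintB : (∫ ω, (if min (Z 3 ω).1 (Z 4 ω).1 > (Z 0 ω).1 ∧ (Z 3 ω).2 = k ∧ (Z 4 ω).2 = k
        then (1:ℝ) else 0) ∂P) = (p k)^2 * (1/3) := by
    rw [integral_congr_ae (Filter.Eventually.of_forall e2), hkey ({2,3} : Finset (Fin 4))]
    have hcard : ({2,3} : Finset (Fin 4)).card = 2 := by decide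
    rw [hcard]
    norm_num
  rw [hintAB, hintA, hintB]
  ring
end
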